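/- arXiv:2006.05067 — 6 statements merged into one kernel-verified Lean document; each statement's English description precedes it below -/
import Mathlib

section
/- Let w : Fin N → ℝ be utility scores and define the Plackett-Luce probability of a full ranking (i_1,...,i_N) as the product over j of exp(w_{i_j}) / Σ_{l≥j} exp(w_{i_l}). Given a partitioned preference S_1 ≻ S_2 ≻ ⋯ ≻ S_M (disjoint sets whose union is {1,...,N}), the probability of observing the partitioned preference, i.e., the sum of PL probabilities over all full rankings consistent with the partition order, equals the product over m = 1,...,M-1 of P(S_m ≻ R_{m+1}), where R_{m+1} = S_{m+1} ∪ ⋯ ∪ S_M and P(A ≻ B) denotes the sum of PL probabilities of orderings of A∪B in which every element of A precedes every element of B (with PL scores restricted appropriately). -/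
open scoped Classical

/-- Plackett-Luce probability of an ordered list of items under scores `w`:
the product over positions of `exp(w i) / (sum of exp-scores of remaining items)`. -/
noncomputable def PLlist {N : ℕ} (w : Fin N → ℝ) : List (Fin N) → ℝ
  | [] => 1
  | i :: t =>
      (Real.exp (w i) / (((i :: t).map fun j => Real.exp (w j)).sum)) * PLlist w t

/-- A full ranking (list) is consistent with the partitioned preference
`S 0 ≻ S 1 ≻ ⋯` if every item of an earlier partition appears before
every item of a later partition. -/
def consistent {N M : ℕ} (S : Fin M → Finset (Fin N)) (l : List (Fin N)) : Prop :=
  ∀ m m' : Fin M, m < m' → ∀ i ∈ S m, ∀ j ∈ S m', l.idxOf i < l.idxOf j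

/-- `P(A ≻ B)`: the sum of Plackett-Luce probabilities (with scores restricted to
`A ∪ B`) of all orderings of `A ∪ B` in which every element of `A` precedes
every element of `B`. -/
noncomputable def PsuccProb {N : ℕ} (w : Fin N → ℝ) (A B : Finset (Fin N)) : ℝ :=
  (A.toList.permutations.map fun la =>
    (B.toList.permutations.map fun lb => PLlist w (la ++ lb)).sum).sum

/-! ### Auxiliary definitions -/

/-- total exp-mass of a list of items -/
noncomputable def PLmassL {N : ℕ} (w : Fin N → ℝ) (l : List (Fin N)) : ℝ :=
  (l.map fun j => Real.exp (w j)).sum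

/-- total exp-mass of a finset of items -/
noncomputable def PLmassF {N : ℕ} (w : Fin N → ℝ) (A : Finset (Fin N)) : ℝ :=
  ∑ i ∈ A, Real.exp (w i)

/-- Plackett-Luce probability with an extra constant `c` added to denominators. -/
noncomputable def PLc {N : ℕ} (w : Fin N → ℝ) (c : ℝ) : List (Fin N) → ℝ
  | [] => 1
  | i :: t => Real.exp (w i) / (c + PLmassL w (i :: t)) * PLc w c t

section Mass

variable {N : ℕ} (w : Fin N → ℝ)

lemma PLmassL_nil : PLmassL w [] = 0 := rfl

lemma PLmassL_cons (i : Fin N) (t : List (Fin N)) :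
    PLmassL w (i :: t) = Real.exp (w i) + PLmassL w t := by simp [PLmassL]

lemma PLmassL_append (l₁ l₂ : List (Fin N)) :
    PLmassL w (l₁ ++ l₂) = PLmassL w l₁ + PLmassL w l₂ := by simp [PLmassL]

lemma PLmassL_perm {l₁ l₂ : List (Fin N)} (h : l₁.Perm l₂) :
    PLmassL w l₁ = PLmassL w l₂ := (h.map _).sum_eq

lemma PLmassL_toList (A : Finset (Fin N)) : PLmassL w A.toList = PLmassF w A :=
  Finset.sum_map_toList A _

lemma PLmassF_pos {A : Finset (Fin N)} (hA : A.Nonempty) : 0 < PLmassF w A :=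
  Finset.sum_pos (fun i _ => Real.exp_pos _) hA

lemma PLlist_eq_PLc (l : List (Fin N)) : PLlist w l = PLc w 0 l := by
  induction l with
  | nil => rfl
  | cons i t ih => simp [PLlist, PLc, ih, PLmassL]

lemma PLc_append (c : ℝ) (l₁ l₂ : List (Fin N)) :
    PLc w c (l₁ ++ l₂) = PLc w (c + PLmassL w l₂) l₁ * PLc w c l₂ := by
  induction l₁ with
  | nil => simp [PLc]
  | cons i t ih =>
      simp only [List.cons_append, PLc, List.append_eq, ih, PLmassL_cons, PLmassL_append]
      ring

end Mass

/-! ### Sums over permutations of a finset -/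

/-- the finset of all permutations (as lists) of a finset -/
noncomputable def PLpermsF {N : ℕ} (A : Finset (Fin N)) : Finset (List (Fin N)) :=
  A.toList.permutations.toFinset

lemma mem_PLpermsF {N : ℕ} {A : Finset (Fin N)} {l : List (Fin N)} :
    l ∈ PLpermsF A ↔ l.Perm A.toList := by
  simp [PLpermsF, List.mem_permutations]

lemma PLpermsSum {N : ℕ} (A : Finset (Fin N)) (f : List (Fin N) → ℝ) :
    (A.toList.permutations.map f).sum = ∑ l ∈ PLpermsF A, f l :=
  (List.sum_toFinset f (List.nodup_permutations _ A.nodup_toList)).symm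

lemma sum_PLpermsF_of_nonempty {N : ℕ} (A : Finset (Fin N)) (hA : A.Nonempty)
    (f : List (Fin N) → ℝ) :
    ∑ l ∈ PLpermsF A, f l = ∑ i ∈ A, ∑ t ∈ PLpermsF (A.erase i), f (i :: t) := by
  haveI : Inhabited (Fin N) := ⟨hA.choose⟩
  rw [← Finset.sum_sigma A (fun i => PLpermsF (A.erase i)) (fun p => f (p.1 :: p.2))]
  refine Finset.sum_nbij' (fun l => (⟨l.headI, l.tail⟩ : (_ : Fin N) × List (Fin N)))
    (fun p => p.1 :: p.2) ?_ ?_ ?_ ?_ ?_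
  · intro l hl
    have hp := mem_PLpermsF.1 hl
    have hln : l ≠ [] := by
      intro h
      subst h
      exact hA.ne_empty (Finset.toList_eq_nil.1 hp.symm.eq_nil)
    obtain ⟨a, t, rfl⟩ := List.exists_cons_of_ne_nil hln
    have hnd : (a :: t).Nodup := hp.symm.nodup A.nodup_toList
    have ham : a ∈ A := by
      have : a ∈ A.toList := hp.mem_iff.1 List.mem_cons_self
      simpa [Finset.mem_toList] using this
    have hperm : t.Perm (A.erase a).toList := by
      rw [List.perm_ext_iff_of_nodup hnd.of_cons (Finset.nodup_toList _)]
      intro x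
      simp only [Finset.mem_toList, Finset.mem_erase]
      constructor
      · intro hx
        refine ⟨fun hxa => (List.nodup_cons.1 hnd).1 (hxa ▸ hx), ?_⟩
        have : x ∈ A.toList := hp.mem_iff.1 (List.mem_cons_of_mem _ hx)
        simpa [Finset.mem_toList] using this
      · rintro ⟨hxa, hxA⟩
        have : x ∈ a :: t := hp.mem_iff.2 (by simpa [Finset.mem_toList] using hxA)
        rcases List.mem_cons.1 this with h | h
        · exact absurd h hxa
        · exact h
    exact Finset.mem_sigma.2 ⟨ham, mem_PLpermsF.2 hperm⟩
  · rintro ⟨i, t⟩ hp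
    obtain ⟨hiA, ht⟩ := Finset.mem_sigma.1 hp
    have ht' : t.Perm (A.erase i).toList := mem_PLpermsF.1 ht
    have hnt : t.Nodup := ht'.symm.nodup (Finset.nodup_toList _)
    have hit : i ∉ t := by
      intro h
      have := ht'.mem_iff.1 h
      simp [Finset.mem_toList] at this
    refine mem_PLpermsF.2 ?_
    rw [List.perm_ext_iff_of_nodup (List.nodup_cons.2 ⟨hit, hnt⟩) (Finset.nodup_toList _)]
    intro x
    simp only [List.mem_cons, Finset.mem_toList]
    constructor
    · rintro (rfl | hx)
      · exact hiA
      · have := ht'.mem_iff.1 hx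
        simp only [Finset.mem_toList, Finset.mem_erase] at this
        exact this.2
    · intro hx
      by_cases hxi : x = i
      · exact Or.inl hxi
      · refine Or.inr (ht'.mem_iff.2 ?_)
        simp only [Finset.mem_toList, Finset.mem_erase]
        exact ⟨hxi, hx⟩
  · intro l hl
    have hln : l ≠ [] := by
      intro h
      subst h
      exact hA.ne_empty (Finset.toList_eq_nil.1 (mem_PLpermsF.1 hl).symm.eq_nil)
    cases l with
    | nil => exact absurd rfl hln
    | cons a t => rfl
  · rintro ⟨i, t⟩ _; rfl
  · intro l hl
    have hln : l ≠ [] := by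
      intro h
      subst h
      exact hA.ne_empty (Finset.toList_eq_nil.1 (mem_PLpermsF.1 hl).symm.eq_nil)
    cases l with
    | nil => exact absurd rfl hln
    | cons a t => rfl

/-- the sum of Plackett-Luce probabilities over all permutations of a finset is 1 -/
lemma PL_sum_perms_eq_one {N : ℕ} (w : Fin N → ℝ) (A : Finset (Fin N)) :
    ∑ l ∈ PLpermsF A, PLc w 0 l = 1 := by
  induction A using Finset.strongInductionOn with
  | _ A ih =>
    rcases A.eq_empty_or_nonempty with rfl | hA
    · simp [PLpermsF, PLc]
    · rw [sum_PLpermsF_of_nonempty A hA]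
      have hmass : 0 < PLmassF w A := PLmassF_pos w hA
      have step : ∀ i ∈ A, ∑ t ∈ PLpermsF (A.erase i), PLc w 0 (i :: t)
          = Real.exp (w i) / PLmassF w A := by
        intro i hi
        have h0 : ∀ t ∈ PLpermsF (A.erase i),
            PLc w 0 (i :: t) = Real.exp (w i) / PLmassF w A * PLc w 0 t := by
          intro t ht
          have h1 : PLmassL w t = PLmassF w (A.erase i) := by
            rw [PLmassL_perm w (mem_PLpermsF.1 ht), PLmassL_toList]
          have h2 : PLmassL w (i :: t) = PLmassF w A := by
            rw [PLmassL_cons, h1]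
            exact Finset.add_sum_erase A (fun j => Real.exp (w j)) hi
          show Real.exp (w i) / (0 + PLmassL w (i :: t)) * PLc w 0 t = _
          rw [zero_add, h2]
        rw [Finset.sum_congr rfl h0, ← Finset.mul_sum,
          ih (A.erase i) (Finset.erase_ssubset hi), mul_one]
      rw [Finset.sum_congr rfl step, ← Finset.sum_div]
      exact div_self (ne_of_gt hmass)

lemma PsuccProb_eq {N : ℕ} (w : Fin N → ℝ) (A B : Finset (Fin N)) :
    PsuccProb w A B = ∑ l ∈ PLpermsF A, PLc w (PLmassF w B) l := by
  unfold PsuccProb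
  rw [PLpermsSum]
  refine Finset.sum_congr rfl fun la _ => ?_
  rw [PLpermsSum]
  have h : ∀ lb ∈ PLpermsF B,
      PLlist w (la ++ lb) = PLc w (PLmassF w B) la * PLc w 0 lb := by
    intro lb hlb
    rw [PLlist_eq_PLc, PLc_append, PLmassL_perm w (mem_PLpermsF.1 hlb),
      PLmassL_toList, zero_add]
  rw [Finset.sum_congr rfl h, ← Finset.mul_sum, PL_sum_perms_eq_one, mul_one]

/-! ### Sorted-class decomposition lemmas -/

lemma PL_flatMap_filter_eq {α β : Type*} [DecidableEq β] [LinearOrder β] (cls : α → β) :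
    ∀ (L : List β) (l : List α), L.Pairwise (· < ·) → (∀ x ∈ l, cls x ∈ L) →
      (l.map cls).Pairwise (· ≤ ·) →
      L.flatMap (fun m => l.filter (fun x => decide (cls x = m))) = l := by
  intro L
  induction L with
  | nil =>
      intro l _ hmem _
      have : l = [] := List.eq_nil_iff_forall_not_mem.2 fun x hx =>
        absurd (hmem x hx) List.not_mem_nil
      simp [this]
  | cons m L' ih =>
      intro l hpw hmem hsort
      have hlt : ∀ m' ∈ L', m < m' := fun m' hm' => (List.pairwise_cons.1 hpw).1 m' hm'
      obtain ⟨l₁, hl₁⟩ : ∃ l₁, List.takeWhile (fun x => decide (cls x = m)) l = l₁ := ⟨_, rfl⟩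
      obtain ⟨l₂, hl₂⟩ : ∃ l₂, List.dropWhile (fun x => decide (cls x = m)) l = l₂ := ⟨_, rfl⟩
      have hsplit : l₁ ++ l₂ = l := by
        rw [← hl₁, ← hl₂]; exact List.takeWhile_append_dropWhile
      have h1 : ∀ x ∈ l₁, cls x = m := by
        intro x hx
        rw [← hl₁] at hx
        exact of_decide_eq_true
          (List.mem_takeWhile_imp (p := fun x => decide (cls x = m)) hx)
      have hsuffix : l₂.Sublist l := by
        rw [← hl₂]; exact (List.dropWhile_suffix _).sublist
      have h2 : ∀ x ∈ l₂, m < cls x := by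
        rcases hc : l₂ with _ | ⟨b, t⟩
        · intro x hx; exact absurd hx List.not_mem_nil
        · have hdw : List.dropWhile (fun x => decide (cls x = m)) l = b :: t := hl₂.trans hc
          have hsfx : (b :: t).Sublist l := by
            rw [← hdw]; exact (List.dropWhile_suffix _).sublist
          have hbl : b ∈ l := hsfx.mem List.mem_cons_self
          have hbm : cls b ≠ m := by
            have hh := List.head?_dropWhile_not (fun x => decide (cls x = m)) l
            rw [hdw] at hh
            simpa using hh
          have hble : m < cls b := by
            rcases List.mem_cons.1 (hmem b hbl) with h | h
            · exact absurd h hbm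
            · exact hlt _ h
          intro x hx
          rcases List.mem_cons.1 hx with rfl | hxt
          · exact hble
          · have hsub2 : ((b :: t).map cls).Pairwise (· ≤ ·) :=
              hsort.sublist (hsfx.map cls)
            simp only [List.map_cons, List.pairwise_cons] at hsub2
            exact lt_of_lt_of_le hble (hsub2.1 _ (List.mem_map_of_mem (f := cls) hxt))
      have hfm : l.filter (fun x => decide (cls x = m)) = l₁ := by
        conv_lhs => rw [← hsplit]
        rw [List.filter_append,
          List.filter_eq_self.2 (fun x hx => decide_eq_true (h1 x hx)),
          List.filter_eq_nil_iff.2 (fun x hx => by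
            simp only [decide_eq_true_eq]
            exact ne_of_gt (h2 x hx)), List.append_nil]
      have hfm' : ∀ m' ∈ L', l.filter (fun x => decide (cls x = m'))
          = l₂.filter (fun x => decide (cls x = m')) := by
        intro m' hm'
        conv_lhs => rw [← hsplit]
        rw [List.filter_append,
          List.filter_eq_nil_iff.2 (fun x hx => by
            simp only [decide_eq_true_eq]
            rw [h1 x hx]
            exact ne_of_lt (hlt m' hm')), List.nil_append]
      show (l.filter fun x => decide (cls x = m))
          ++ L'.flatMap (fun m' => l.filter fun x => decide (cls x = m')) = l
      rw [hfm]
      have hcongr : L'.flatMap (fun m' => l.filter fun x => decide (cls x = m'))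
          = L'.flatMap (fun m' => l₂.filter fun x => decide (cls x = m')) := by
        rw [List.flatMap_def, List.flatMap_def, List.map_congr_left hfm']
      rw [hcongr, ih l₂ hpw.of_cons (fun x hx => ?_) (hsort.sublist (hsuffix.map cls)), hsplit]
      rcases List.mem_cons.1 (hmem x (hsuffix.mem hx)) with h | h
      · exact absurd h (ne_of_gt (h2 x hx))
      · exact h

lemma PL_flatMap_single {α β : Type*} [DecidableEq β] :
    ∀ (L : List β), L.Nodup → ∀ m ∈ L, ∀ v : List α,
      L.flatMap (fun m' => if m' = m then v else []) = v := by
  intro L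
  induction L with
  | nil => intro _ m hm; exact absurd hm List.not_mem_nil
  | cons a L' ih =>
      intro hnd m hm v
      rcases List.mem_cons.1 hm with rfl | hm'
      · have hz : ∀ m' ∈ L', (if m' = m then v else []) = [] := by
          intro m' hm'
          have : m' ≠ m := fun h => (List.nodup_cons.1 hnd).1 (h ▸ hm')
          simp [this]
        have hrest : L'.flatMap (fun m' => if m' = m then v else []) = [] := by
          rw [List.flatMap_def, List.map_congr_left hz]
          simp
        rw [List.flatMap_cons, if_pos rfl, hrest, List.append_nil]
      · have ha : a ≠ m := fun h => (List.nodup_cons.1 hnd).1 (h ▸ hm')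
        simp only [List.flatMap_cons, if_neg ha, List.nil_append]
        exact ih (List.nodup_cons.1 hnd).2 m hm' v

/-- consistency implies the class sequence is sorted -/
lemma PL_sorted_of_consistent {N M : ℕ} {S : Fin M → Finset (Fin N)} {cls : Fin N → Fin M}
    (hcls : ∀ i, i ∈ S (cls i)) {l : List (Fin N)} (hn : l.Nodup)
    (h : consistent S l) : (l.map cls).Pairwise (· ≤ ·) := by
  rw [List.pairwise_iff_getElem]
  intro p q hp hq hpq
  simp only [List.getElem_map]
  by_contra hle
  push_neg at hle
  have hlen : p < l.length := by simpa using hp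
  have hlen' : q < l.length := by simpa using hq
  have hkey := h (cls l[q]) (cls l[p]) hle l[q] (hcls _) l[p] (hcls _)
  have e1 : l.idxOf l[q] = q := List.Nodup.idxOf_getElem hn q hlen'
  have e2 : l.idxOf l[p] = p := List.Nodup.idxOf_getElem hn p hlen
  rw [e1, e2] at hkey
  omega

/-- sortedness of the class sequence implies consistency -/
lemma PL_consistent_of_sorted {N M : ℕ} {S : Fin M → Finset (Fin N)} {cls : Fin N → Fin M}
    (hcls_eq : ∀ {i m}, i ∈ S m → cls i = m) {l : List (Fin N)} (hn : l.Nodup)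
    (hall : ∀ i, i ∈ l) (hs : (l.map cls).Pairwise (· ≤ ·)) : consistent S l := by
  intro m m' hmm' i hi j hj
  have hij : i ≠ j := by
    intro h
    subst h
    exact absurd (hcls_eq hi ▸ hcls_eq hj) (ne_of_lt hmm')
  have hpi : l.idxOf i < l.length := List.idxOf_lt_length_iff.2 (hall i)
  have hpj : l.idxOf j < l.length := List.idxOf_lt_length_iff.2 (hall j)
  have hgi : l[l.idxOf i] = i := List.getElem_idxOf hpi
  have hgj : l[l.idxOf j] = j := List.getElem_idxOf hpj
  have hne : l.idxOf i ≠ l.idxOf j := fun h =>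
    hij ((List.idxOf_inj (hall i)).1 h)
  rcases lt_or_gt_of_ne hne with h | h
  · exact h
  · exfalso
    have := (List.pairwise_iff_getElem.1 hs) (l.idxOf j) (l.idxOf i)
      (by simpa using hpj) (by simpa using hpi) h
    simp only [List.getElem_map] at this
    rw [hgi, hgj, hcls_eq hi, hcls_eq hj] at this
    exact absurd this (not_le.2 hmm')

/-- concatenating blocks in order yields a sorted class sequence -/
lemma PL_sorted_flatMap {N M : ℕ} {cls : Fin N → Fin M} {g : Fin M → List (Fin N)}
    (hg : ∀ m, ∀ x ∈ g m, cls x = m) :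
    (((List.finRange M).flatMap g).map cls).Pairwise (· ≤ ·) := by
  rw [List.map_flatMap, List.flatMap_def, List.pairwise_flatten]
  constructor
  · intro l hl
    simp only [List.mem_map, List.mem_finRange, true_and] at hl
    obtain ⟨m, rfl⟩ := hl
    apply List.pairwise_of_forall_mem_list
    intro x hx y hy
    simp only [List.mem_map] at hx hy
    obtain ⟨x', hx', rfl⟩ := hx
    obtain ⟨y', hy', rfl⟩ := hy
    rw [hg m x' hx', hg m y' hy']
  · rw [List.pairwise_map]
    refine (List.pairwise_lt_finRange M).imp_of_mem ?_
    intro a b _ _ hab x hx y hy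
    simp only [List.mem_map] at hx hy
    obtain ⟨x', hx', rfl⟩ := hx
    obtain ⟨y', hy', rfl⟩ := hy
    rw [hg a x' hx', hg b y' hy']
    exact le_of_lt hab

/-- mass of a concatenation of blocks -/
lemma PL_massL_flatMap {N M : ℕ} (w : Fin N → ℝ) (g : Fin M → List (Fin N)) :
    ∀ L : List (Fin M), PLmassL w (L.flatMap g) = (L.map fun m => PLmassL w (g m)).sum := by
  intro L
  induction L with
  | nil => simp [PLmassL]
  | cons a L' ih => simp [List.flatMap_cons, PLmassL_append, ih]

/-- key product decomposition of `PLc` over an upward-closed sorted index list -/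
lemma PL_PLc_flatMap {N M : ℕ} (w : Fin N → ℝ) (S : Fin M → Finset (Fin N))
    (hdisj : ∀ m m' : Fin M, m ≠ m' → Disjoint (S m) (S m'))
    (g : Fin M → List (Fin N)) (hg : ∀ m, (g m).Perm (S m).toList) :
    ∀ L : List (Fin M), L.Pairwise (· < ·) → (∀ m ∈ L, ∀ m', m < m' → m' ∈ L) →
      PLc w 0 (L.flatMap g) =
        ∏ m ∈ L.toFinset,
          PLc w (PLmassF w ((Finset.univ.filter fun r : Fin M => m < r).biUnion S)) (g m) := by
  intro L
  induction L with
  | nil => simp [PLc]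
  | cons m L' ih =>
      intro hpw hup
      have hlt : ∀ m' ∈ L', m < m' := fun m' hm' => (List.pairwise_cons.1 hpw).1 m' hm'
      have hndL' : L'.Nodup := (hpw.of_cons).imp ne_of_lt
      have hL'fin : L'.toFinset = Finset.univ.filter (fun r : Fin M => m < r) := by
        ext r
        simp only [List.mem_toFinset, Finset.mem_filter, Finset.mem_univ, true_and]
        constructor
        · exact hlt r
        · intro hr
          have : r ∈ m :: L' := hup m List.mem_cons_self r hr
          rcases List.mem_cons.1 this with rfl | h
          · exact absurd hr (lt_irrefl r)
          · exact h
      have hmass : PLmassL w (L'.flatMap g)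
          = PLmassF w ((Finset.univ.filter fun r : Fin M => m < r).biUnion S) := by
        rw [PL_massL_flatMap]
        have h1 : ∀ m' ∈ L', PLmassL w (g m') = PLmassF w (S m') := by
          intro m' _
          rw [PLmassL_perm w (hg m'), PLmassL_toList]
        rw [List.map_congr_left h1, ← List.sum_toFinset _ hndL', hL'fin]
        rw [PLmassF, Finset.sum_biUnion]
        · rfl
        · intro a _ b _ hab
          exact hdisj a b hab
      have hup' : ∀ a ∈ L', ∀ b, a < b → b ∈ L' := by
        intro a ha b hab
        have : b ∈ m :: L' := hup a (List.mem_cons_of_mem m ha) b hab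
        rcases List.mem_cons.1 this with rfl | h
        · exact absurd (lt_trans (hlt a ha) hab) (lt_irrefl b)
        · exact h
      have hmnot : m ∉ L'.toFinset := by
        rw [List.mem_toFinset]
        intro h
        exact absurd (hlt m h) (lt_irrefl m)
      rw [List.flatMap_cons, PLc_append, zero_add, hmass, List.toFinset_cons,
        Finset.prod_insert hmnot, ih hpw.of_cons hup']

/-- The probability of observing the partitioned preference
`S 1 ≻ ⋯ ≻ S M` (sum of PL probabilities over all consistent full rankings)
equals `∏_{m=1}^{M-1} P(S m ≻ R (m+1))` where `R (m+1) = ∪_{r > m} S r`. -/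
theorem partitioned_preference_prob_eq_prod
    {N M : ℕ} (hM : 1 ≤ M) (w : Fin N → ℝ) (S : Fin M → Finset (Fin N))
    (hdisj : ∀ m m' : Fin M, m ≠ m' → Disjoint (S m) (S m'))
    (hcover : Finset.univ.biUnion S = (Finset.univ : Finset (Fin N)))
    (hne : ∀ m : Fin M, (S m).Nonempty) :
    ((List.finRange N).permutations.map fun l =>
        if consistent S l then PLlist w l else 0).sum =
      ∏ m ∈ Finset.univ.filter (fun m : Fin M => (m : ℕ) < M - 1),
        PsuccProb w (S m)
          ((Finset.univ.filter fun r : Fin M => m < r).biUnion S) := by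
  classical
  -- set up the class function
  have hex : ∀ i : Fin N, ∃ m, i ∈ S m := by
    intro i
    have h := Finset.mem_univ i
    rw [← hcover] at h
    simpa [Finset.mem_biUnion] using h
  set cls : Fin N → Fin M := fun i => (hex i).choose with hclsdef
  have hcls : ∀ i, i ∈ S (cls i) := fun i => (hex i).choose_spec
  have hcls_eq : ∀ {i m}, i ∈ S m → cls i = m := by
    intro i m h
    by_contra hne'
    exact (Finset.disjoint_left.1 (hdisj _ _ hne')) (hcls i) h
  -- convert LHS to a Finset sum over consistent permutations
  have hnodupP : (List.finRange N).permutations.Nodup :=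
    List.nodup_permutations _ (List.nodup_finRange N)
  rw [← List.sum_toFinset _ hnodupP, ← Finset.sum_filter]
  set D := ((List.finRange N).permutations.toFinset.filter fun l => consistent S l) with hD
  have hmemD : ∀ {l : List (Fin N)},
      l ∈ D ↔ l.Perm (List.finRange N) ∧ consistent S l := by
    intro l
    simp [hD, List.mem_permutations]
  set Rnext : Fin M → Finset (Fin N) :=
    fun m => (Finset.univ.filter fun r : Fin M => m < r).biUnion S with hRnext
  set T := Fintype.piFinset (fun m : Fin M => PLpermsF (S m)) with hT
  -- properties of members of D
  have hDprop : ∀ {l : List (Fin N)}, l ∈ D →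
      l.Nodup ∧ (∀ i : Fin N, i ∈ l) ∧ consistent S l := by
    intro l hl
    obtain ⟨hp, hc⟩ := hmemD.1 hl
    exact ⟨hp.symm.nodup (List.nodup_finRange N), fun i => hp.mem_iff.2 (List.mem_finRange i), hc⟩
  -- the key bijection
  have key : ∑ l ∈ D, PLlist w l
      = ∑ g ∈ T, PLc w 0 ((List.finRange M).flatMap g) := by
    refine Finset.sum_nbij' (fun l => fun m => l.filter (fun x => decide (cls x = m)))
      (fun g => (List.finRange M).flatMap g) ?_ ?_ ?_ ?_ ?_
    · -- filters of a consistent permutation lie in the block-permutation sets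
      intro l hl
      obtain ⟨hnd, hall, _⟩ := hDprop hl
      rw [hT, Fintype.mem_piFinset]
      intro m
      refine mem_PLpermsF.2 ?_
      rw [List.perm_ext_iff_of_nodup (hnd.filter _) (Finset.nodup_toList _)]
      intro x
      simp only [List.mem_filter, Finset.mem_toList, decide_eq_true_eq]
      constructor
      · rintro ⟨_, hx⟩
        exact hx ▸ hcls x
      · intro hx
        exact ⟨hall x, hcls_eq hx⟩
    · -- concatenation of block permutations is a consistent permutation
      intro g hg
      rw [hT, Fintype.mem_piFinset] at hg
      have hgp : ∀ m, (g m).Perm (S m).toList := fun m => mem_PLpermsF.1 (hg m)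
      have hgm : ∀ m, ∀ x ∈ g m, x ∈ S m := by
        intro m x hx
        have := (hgp m).mem_iff.1 hx
        simpa [Finset.mem_toList] using this
      have hgcls : ∀ m, ∀ x ∈ g m, cls x = m := fun m x hx => hcls_eq (hgm m x hx)
      have hnodup : ((List.finRange M).flatMap g).Nodup := by
        rw [List.nodup_flatMap]
        constructor
        · intro m _
          exact (hgp m).symm.nodup (Finset.nodup_toList _)
        · refine (List.pairwise_lt_finRange M).imp_of_mem ?_
          intro a b _ _ hab x hxa hxb
          exact Finset.disjoint_left.1 (hdisj a b (ne_of_lt hab)) (hgm a x hxa) (hgm b x hxb)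
      have hallmem : ∀ i : Fin N, i ∈ (List.finRange M).flatMap g := by
        intro i
        rw [List.mem_flatMap]
        exact ⟨cls i, List.mem_finRange _, (hgp (cls i)).mem_iff.2
          (by simpa [Finset.mem_toList] using hcls i)⟩
      refine hmemD.2 ⟨?_, ?_⟩
      · rw [List.perm_ext_iff_of_nodup hnodup (List.nodup_finRange N)]
        intro x
        simp only [List.mem_finRange, iff_true]
        exact hallmem x
      · exact PL_consistent_of_sorted (fun {i m} h => hcls_eq h) hnodup hallmem
          (PL_sorted_flatMap hgcls)
    · -- left inverse
      intro l hl
      obtain ⟨hnd, _, hc⟩ := hDprop hl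
      exact PL_flatMap_filter_eq cls (List.finRange M) l (List.pairwise_lt_finRange M)
        (fun x _ => List.mem_finRange _) (PL_sorted_of_consistent hcls hnd hc)
    · -- right inverse
      intro g hg
      rw [hT, Fintype.mem_piFinset] at hg
      have hgp : ∀ m, (g m).Perm (S m).toList := fun m => mem_PLpermsF.1 (hg m)
      have hgm : ∀ m, ∀ x ∈ g m, x ∈ S m := by
        intro m x hx
        have := (hgp m).mem_iff.1 hx
        simpa [Finset.mem_toList] using this
      funext m
      show ((List.finRange M).flatMap g).filter (fun x => decide (cls x = m)) = g m
      rw [List.filter_flatMap]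
      have hterm : ∀ m' ∈ List.finRange M,
          (g m').filter (fun x => decide (cls x = m)) = if m' = m then g m else [] := by
        intro m' _
        by_cases h : m' = m
        · subst h
          rw [if_pos rfl]
          exact List.filter_eq_self.2 fun x hx =>
            decide_eq_true (hcls_eq (hgm m' x hx))
        · rw [if_neg h]
          refine List.filter_eq_nil_iff.2 fun x hx => ?_
          simp only [decide_eq_true_eq]
          rw [hcls_eq (hgm m' x hx)]
          exact h
      rw [List.flatMap_def, List.map_congr_left hterm, ← List.flatMap_def]
      exact PL_flatMap_single (List.finRange M) (List.nodup_finRange M) m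
        (List.mem_finRange m) (g m)
    · -- values agree
      intro l hl
      obtain ⟨hnd, _, hc⟩ := hDprop hl
      rw [PLlist_eq_PLc,
        PL_flatMap_filter_eq cls (List.finRange M) l (List.pairwise_lt_finRange M)
          (fun x _ => List.mem_finRange _) (PL_sorted_of_consistent hcls hnd hc)]
  rw [key]
  -- rewrite each summand as a product over blocks
  have hprod : ∀ g ∈ T, PLc w 0 ((List.finRange M).flatMap g)
      = ∏ m : Fin M, PLc w (PLmassF w (Rnext m)) (g m) := by
    intro g hg
    rw [hT, Fintype.mem_piFinset] at hg
    have hgp : ∀ m, (g m).Perm (S m).toList := fun m => mem_PLpermsF.1 (hg m)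
    rw [PL_PLc_flatMap w S hdisj g hgp (List.finRange M) (List.pairwise_lt_finRange M)
      (fun m _ m' _ => List.mem_finRange m'), List.toFinset_finRange]
  rw [Finset.sum_congr rfl hprod, ← Finset.prod_univ_sum]
  -- split off the (trivial) last factor
  rw [← Finset.prod_filter_mul_prod_filter_not Finset.univ (fun m : Fin M => (m : ℕ) < M - 1)]
  have hlast : ∏ m ∈ Finset.univ.filter (fun m : Fin M => ¬ (m : ℕ) < M - 1),
      (∑ l ∈ PLpermsF (S m), PLc w (PLmassF w (Rnext m)) l) = 1 := by
    refine Finset.prod_eq_one ?_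
    intro m hm
    rw [Finset.mem_filter] at hm
    have hmlast : (m : ℕ) = M - 1 := by
      have h1 : (m : ℕ) < M := m.isLt
      omega
    have hfilter : (Finset.univ.filter fun r : Fin M => m < r) = ∅ := by
      refine Finset.filter_false_of_mem ?_
      intro r _
      intro hr
      have h1 : (m : ℕ) < (r : ℕ) := hr
      have h2 := r.isLt
      omega
    have hRempty : Rnext m = ∅ := by
      show (Finset.univ.filter fun r : Fin M => m < r).biUnion S = ∅
      rw [hfilter]
      simp
    have hmass0 : PLmassF w (Rnext m) = 0 := by rw [hRempty, PLmassF, Finset.sum_empty]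
    rw [hmass0]
    exact PL_sum_perms_eq_one w (S m)
  rw [hlast, mul_one]
  refine Finset.prod_congr rfl ?_
  intro m _
  rw [PsuccProb_eq]
end

section
/- For N items with PL scores w, the sum over all permutations (i_1,...,i_N) consistent with a partitioned preference S_1 ≻ ⋯ ≻ S_M of ∏_{l=1}^N exp(w_{i_l}) / Σ_{r=l}^N exp(w_{i_r}) equals ∏_{m=1}^{M-1} [ Σ_{(j_1,...,j_{n_m}) ∈ σ(S_m)} ∏_{l=1}^{n_m} exp(w_{j_l}) / ( Σ_{k∈R_m} exp(w_k) − Σ_{r=1}^{l-1} exp(w_{j_r}) ) ], where σ(S_m) is the set of permutations of S_m, n_m = |S_m|, and R_m = ∪_{r=m}^M S_r. -/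
open scoped Classical

/-- `innerProd w D (j₁,…,j_n) = ∏_{l=1}^{n} exp(w j_l) / (D − ∑_{r<l} exp (w j_r))`. -/
noncomputable def innerProd {N : ℕ} (w : Fin N → ℝ) : ℝ → List (Fin N) → ℝ
  | _, [] => 1
  | D, i :: t => (Real.exp (w i) / D) * innerProd w (D - Real.exp (w i)) t

variable {N : ℕ} (w : Fin N → ℝ)

lemma innerProd_append : ∀ (l1 l2 : List (Fin N)) (D : ℝ),
    innerProd w D (l1 ++ l2) =
      innerProd w D l1 * innerProd w (D - (l1.map fun i => Real.exp (w i)).sum) l2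
  | [], l2, D => by simp [innerProd]
  | i :: t, l2, D => by
    simp only [List.cons_append, innerProd, List.append_eq]
    rw [innerProd_append t l2]
    simp only [List.map_cons, List.sum_cons, sub_sub]
    ring

lemma PL_eq_inner : ∀ l : List (Fin N),
    PLlist w l = innerProd w ((l.map fun i => Real.exp (w i)).sum) l
  | [] => rfl
  | i :: t => by
    simp only [PLlist, innerProd, PL_eq_inner t, List.map_cons, List.sum_cons]
    ring_nf

noncomputable def permsF (s : Finset (Fin N)) : Finset (List (Fin N)) :=
  s.toList.permutations.toFinset

lemma mem_permsF {s : Finset (Fin N)} {p : List (Fin N)} :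
    p ∈ permsF s ↔ p.Perm s.toList := by
  simp [permsF, List.mem_permutations]

variable {w}

lemma toList_erase_perm (s : Finset (Fin N)) (a : Fin N) :
    (s.erase a).toList.Perm (s.toList.erase a) := by
  rw [← Multiset.coe_eq_coe]
  simp [Finset.toList, Finset.erase, ← Multiset.coe_erase]

lemma permsF_decomp {s : Finset (Fin N)} (hs : s.Nonempty) :
    permsF s = s.biUnion (fun i => (permsF (s.erase i)).image (i :: ·)) := by
  ext p
  simp only [Finset.mem_biUnion, Finset.mem_image, mem_permsF]
  constructor
  · intro hp
    cases p with
    | nil =>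
      exfalso
      have := hp.length_eq
      simp [Finset.length_toList] at this
      exact absurd (Finset.card_eq_zero.mp this.symm) hs.ne_empty
    | cons a q =>
      have h1 : a ∈ s.toList ∧ q.Perm (s.toList.erase a) :=
        List.cons_perm_iff_perm_erase.mp hp
      refine ⟨a, Finset.mem_toList.mp h1.1, q, ?_, rfl⟩
      exact h1.2.trans (toList_erase_perm s a).symm
  · rintro ⟨i, hi, q, hq, rfl⟩
    exact List.cons_perm_iff_perm_erase.mpr
      ⟨Finset.mem_toList.mpr hi, hq.trans (toList_erase_perm s i)⟩

lemma sum_exp_pos {s : Finset (Fin N)} (hs : s.Nonempty) (w : Fin N → ℝ) :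
    0 < ∑ i ∈ s, Real.exp (w i) :=
  Finset.sum_pos (fun i _ => Real.exp_pos _) hs

lemma norm_sum (w : Fin N → ℝ) : ∀ (n : ℕ) (s : Finset (Fin N)), s.card = n →
    ∑ p ∈ permsF s, innerProd w (∑ i ∈ s, Real.exp (w i)) p = 1 := by
  intro n
  induction n with
  | zero =>
    intro s hs
    have : s = ∅ := Finset.card_eq_zero.mp hs
    subst this
    simp [permsF, innerProd]
  | succ n ih =>
    intro s hs
    have hne : s.Nonempty := Finset.card_pos.mp (hs ▸ n.succ_pos)
    set D := ∑ i ∈ s, Real.exp (w i) with hD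
    have hdisj : (↑s : Set (Fin N)).PairwiseDisjoint
        (fun i => (permsF (s.erase i)).image (i :: ·)) := by
      intro i _ j _ hij
      simp only [Finset.disjoint_left, Finset.mem_image]
      rintro p ⟨q, _, rfl⟩ ⟨q', _, h⟩
      exact hij (List.head_eq_of_cons_eq h).symm
    rw [permsF_decomp hne, Finset.sum_biUnion hdisj]
    have hstep : ∀ i ∈ s,
        (∑ p ∈ (permsF (s.erase i)).image (i :: ·), innerProd w D p)
          = Real.exp (w i) / D := by
      intro i hi
      rw [Finset.sum_image (fun a _ b _ h => List.tail_eq_of_cons_eq h)]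
      have : ∀ q, innerProd w D (i :: q)
          = Real.exp (w i) / D * innerProd w (D - Real.exp (w i)) q := fun q => rfl
      simp only [this, ← Finset.mul_sum]
      have herase : D - Real.exp (w i) = ∑ k ∈ s.erase i, Real.exp (w k) := by
        rw [Finset.sum_erase_eq_sub hi]
      rw [herase, ih (s.erase i) (by rw [Finset.card_erase_of_mem hi, hs]; rfl), mul_one]
    rw [Finset.sum_congr rfl hstep, ← Finset.sum_div, ← hD,
      div_self (ne_of_gt (sum_exp_pos hne w))]


lemma prefix_filter_of_lt (P : Fin N → Bool) :
    ∀ (q : List (Fin N)), q.Nodup →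
    (∀ i ∈ q, ∀ j ∈ q, P i = true → P j = false → q.idxOf i < q.idxOf j) →
    q = q.filter P ++ q.filter (fun x => !P x)
  | [], _, _ => by simp
  | x :: t, hnd, h => by
    have hxt : x ∉ t := (List.nodup_cons.mp hnd).1
    have hndt : t.Nodup := (List.nodup_cons.mp hnd).2
    by_cases hx : P x = true
    · have ht : t = t.filter P ++ t.filter (fun x => !P x) := by
        refine prefix_filter_of_lt P t hndt ?_
        intro i hi j hj hPi hPj
        have hxi : x ≠ i := fun e => hxt (e ▸ hi)
        have hxj : x ≠ j := fun e => hxt (e ▸ hj)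
        have := h i (List.mem_cons_of_mem x hi) j (List.mem_cons_of_mem x hj) hPi hPj
        rwa [List.idxOf_cons_ne t hxi, List.idxOf_cons_ne t hxj,
          Nat.succ_lt_succ_iff] at this
      rw [List.filter_cons_of_pos hx, List.filter_cons_of_neg (by simp [hx])]
      exact congrArg (x :: ·) ht ▸ by rw [List.cons_append, ← ht]
    · have hx' : P x = false := Bool.eq_false_iff.mpr hx
      have hnone : ∀ i ∈ t, P i = false := by
        intro i hi
        by_contra hPi
        have hPi : P i = true := Bool.not_eq_false _ ▸ (by simpa using hPi)
        have hxi : x ≠ i := fun e => hxt (e ▸ hi)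
        have := h i (List.mem_cons_of_mem x hi) x (List.mem_cons_self (a := x) (l := t)) hPi hx'
        rw [List.idxOf_cons_ne t hxi, List.idxOf_cons_self] at this
        exact Nat.not_succ_lt_self (Nat.lt_of_lt_of_le this (Nat.zero_le _))
      have hfilP : (x :: t).filter P = [] := by
        rw [List.filter_eq_nil_iff]
        intro a ha
        rcases List.mem_cons.mp ha with rfl | ha'
        · simp [hx']
        · simp [hnone a ha']
      have hfilnP : (x :: t).filter (fun x => !P x) = x :: t := by
        rw [List.filter_eq_self]
        intro a ha
        rcases List.mem_cons.mp ha with rfl | ha'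
        · simp [hx']
        · simp [hnone a ha']
      rw [hfilP, hfilnP, List.nil_append]

lemma eq_flatten_of_consistent :
    ∀ (M : ℕ) (S : Fin M → Finset (Fin N)) (q : List (Fin N)),
    q.Nodup →
    (∀ x ∈ q, ∃ m, x ∈ S m) →
    (∀ m m' : Fin M, m ≠ m' → Disjoint (S m) (S m')) →
    (∀ m m' : Fin M, m < m' → ∀ i ∈ S m, ∀ j ∈ S m', i ∈ q → j ∈ q →
      q.idxOf i < q.idxOf j) →
    q = (List.ofFn (fun m => q.filter (fun x => decide (x ∈ S m)))).flatten := by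
  intro M
  induction M with
  | zero =>
    intro S q _ hcov _ _
    have : q = [] := List.eq_nil_iff_forall_not_mem.mpr
      (fun x hx => absurd (hcov x hx) (by rintro ⟨m, _⟩; exact m.elim0))
    simp [this]
  | succ M ih =>
    intro S q hnd hcov hdisj h
    set P : Fin N → Bool := fun x => decide (x ∈ S 0) with hP
    have step1 : q = q.filter P ++ q.filter (fun x => !P x) := by
      refine prefix_filter_of_lt P q hnd ?_
      intro i hi j hj hPi hPj
      have hiS : i ∈ S 0 := by simpa [hP] using hPi
      have hjS : j ∉ S 0 := by simpa [hP] using hPj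
      obtain ⟨m, hm⟩ := hcov j hj
      have hm0 : m ≠ 0 := fun e => hjS (e ▸ hm)
      exact h 0 m (Fin.pos_of_ne_zero hm0) i hiS j hm hi hj
    set qr := q.filter (fun x => !P x) with hqr
    have hmemqr : ∀ x, x ∈ qr ↔ (x ∈ q ∧ x ∉ S 0) := by
      intro x; simp [hqr, List.mem_filter, hP]
    have hqrnd : qr.Nodup := (List.filter_sublist (l := q)).nodup hnd
    have hIH : qr = (List.ofFn (fun m : Fin M =>
        qr.filter (fun x => decide (x ∈ S m.succ)))).flatten := by
      refine ih (fun m => S m.succ) qr hqrnd ?_ ?_ ?_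
      · intro x hx
        obtain ⟨hxq, hx0⟩ := (hmemqr x).mp hx
        obtain ⟨m, hm⟩ := hcov x hxq
        obtain ⟨k, rfl⟩ := Fin.eq_succ_of_ne_zero (fun e => hx0 (e ▸ hm))
        exact ⟨k, hm⟩
      · intro m m' hne
        exact hdisj m.succ m'.succ (fun e => hne (Fin.succ_injective _ e))
      · intro m m' hlt i hiS j hjS hiq hjq
        have hlt' : m.succ < m'.succ := Fin.succ_lt_succ_iff.mpr hlt
        have hiq' : i ∈ q := ((hmemqr i).mp hiq).1
        have hjq' : j ∈ q := ((hmemqr j).mp hjq).1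
        have := h m.succ m'.succ hlt' i hiS j hjS hiq' hjq'
        have hinp : i ∉ q.filter P := by
          simp only [List.mem_filter, not_and]
          intro _
          simp [hP, ((hmemqr i).mp hiq).2]
        have hjnp : j ∉ q.filter P := by
          simp only [List.mem_filter, not_and]
          intro _
          simp [hP, ((hmemqr j).mp hjq).2]
        rw [step1, List.idxOf_append_of_notMem hinp,
          List.idxOf_append_of_notMem hjnp] at this
        exact Nat.lt_of_add_lt_add_left this
    have hfilter_eq : ∀ m : Fin M,
        qr.filter (fun x => decide (x ∈ S m.succ)) =
          q.filter (fun x => decide (x ∈ S m.succ)) := by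
      intro m
      rw [hqr, List.filter_filter]
      refine List.filter_congr ?_
      intro a _
      by_cases ha : a ∈ S m.succ
      · have : a ∉ S 0 := fun h0 =>
          (Finset.disjoint_left.mp (hdisj m.succ 0 (Fin.succ_ne_zero m)) ha) h0
        simp [hP, ha, this]
      · simp [ha]
    conv_lhs => rw [step1]
    rw [List.ofFn_succ, List.flatten_cons]
    congr 1
    rw [hIH]
    congr 1
    exact congrArg List.ofFn (funext fun m => hfilter_eq m)

lemma consistent_flatten :
    ∀ (M : ℕ) (S : Fin M → Finset (Fin N)) (p : Fin M → List (Fin N)),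
    (∀ m x, x ∈ p m ↔ x ∈ S m) →
    (∀ m m' : Fin M, m ≠ m' → Disjoint (S m) (S m')) →
    ∀ m m' : Fin M, m < m' → ∀ i ∈ S m, ∀ j ∈ S m',
      (List.ofFn p).flatten.idxOf i < (List.ofFn p).flatten.idxOf j := by
  intro M
  induction M with
  | zero => intro _ _ _ _ m; exact m.elim0
  | succ M ih =>
    intro S p hmem hdisj m m' hlt i hiS j hjS
    rw [List.ofFn_succ, List.flatten_cons]
    have hm'0 : m' ≠ 0 := fun e => by
      rw [e] at hlt; exact absurd hlt (Fin.not_lt.mpr (Fin.zero_le m))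
    have hj0 : j ∉ p 0 := fun hj => by
      have : j ∈ S 0 := (hmem 0 j).mp hj
      exact (Finset.disjoint_left.mp (hdisj m' 0 hm'0) hjS) this
    by_cases hm : m = 0
    · subst hm
      have hi0 : i ∈ p 0 := (hmem 0 i).mpr hiS
      rw [List.idxOf_append_of_mem hi0, List.idxOf_append_of_notMem hj0]
      exact Nat.lt_of_lt_of_le (List.idxOf_lt_length_iff.mpr hi0) (Nat.le_add_right _ _)
    · obtain ⟨k, rfl⟩ := Fin.eq_succ_of_ne_zero hm
      obtain ⟨k', rfl⟩ := Fin.eq_succ_of_ne_zero hm'0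
      have hi0 : i ∉ p 0 := fun hi => by
        have : i ∈ S 0 := (hmem 0 i).mp hi
        exact (Finset.disjoint_left.mp (hdisj k.succ 0 (Fin.succ_ne_zero k)) hiS) this
      rw [List.idxOf_append_of_notMem hi0, List.idxOf_append_of_notMem hj0]
      have := ih (fun m => S m.succ) (fun m => p m.succ)
        (fun m x => hmem m.succ x) 
        (fun a b hab => hdisj a.succ b.succ (fun e => hab (Fin.succ_injective _ e)))
        k k' (Fin.succ_lt_succ_iff.mp hlt) i hiS j hjS
      exact Nat.add_lt_add_left this _

lemma flatten_perm_univ {M : ℕ} (S : Fin M → Finset (Fin N)) (p : Fin M → List (Fin N))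
    (hmem : ∀ m x, x ∈ p m ↔ x ∈ S m) (hnd : ∀ m, (p m).Nodup)
    (hdisj : ∀ m m' : Fin M, m ≠ m' → Disjoint (S m) (S m'))
    (hcover : Finset.univ.biUnion S = (Finset.univ : Finset (Fin N))) :
    (List.ofFn p).flatten.Perm (Finset.univ : Finset (Fin N)).toList := by
  have hnodup : (List.ofFn p).flatten.Nodup := by
    rw [List.nodup_flatten]
    constructor
    · intro l hl
      obtain ⟨m, rfl⟩ := List.mem_ofFn.mp hl
      exact hnd m
    · rw [List.pairwise_ofFn]
      intro a b hab x hxa hxb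
      exact (Finset.disjoint_left.mp (hdisj a b (ne_of_lt hab)) ((hmem a x).mp hxa))
        ((hmem b x).mp hxb)
  refine List.perm_of_nodup_nodup_toFinset_eq hnodup (Finset.nodup_toList _) ?_
  rw [Finset.toList_toFinset]
  ext x
  simp only [List.mem_toFinset, List.mem_flatten, Finset.mem_univ, iff_true]
  have hx : x ∈ Finset.univ.biUnion S := hcover ▸ Finset.mem_univ x
  obtain ⟨m, _, hm⟩ := Finset.mem_biUnion.mp hx
  exact ⟨p m, List.mem_ofFn.mpr ⟨m, rfl⟩, (hmem m x).mpr hm⟩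

lemma filter_lt_succ_sum {M : ℕ} (f : Fin (M + 1) → ℝ) (m : Fin M) :
    ∑ k ∈ Finset.univ.filter (fun k => k < m.succ), f k =
      f 0 + ∑ k ∈ Finset.univ.filter (fun k : Fin M => k < m), f k.succ := by
  rw [Finset.sum_filter, Finset.sum_filter, Fin.sum_univ_succ]
  simp [Fin.succ_lt_succ_iff, Fin.succ_pos]

lemma innerProd_flatten (w : Fin N → ℝ) :
    ∀ (M : ℕ) (p : Fin M → List (Fin N)) (D : ℝ),
    innerProd w D (List.ofFn p).flatten =
      ∏ m : Fin M, innerProd w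
        (D - ∑ m' ∈ Finset.univ.filter (fun m' => m' < m),
          ((p m').map fun i => Real.exp (w i)).sum) (p m) := by
  intro M
  induction M with
  | zero => intro p D; simp [innerProd]
  | succ M ih =>
    intro p D
    rw [List.ofFn_succ, List.flatten_cons, innerProd_append, ih, Fin.prod_univ_succ]
    congr 1
    · congr 1
      simp
    · refine Finset.prod_congr rfl ?_
      intro m _
      congr 1
      rw [filter_lt_succ_sum]
      ring

lemma flatten_eq_single {α : Type*} :
    ∀ (M : ℕ) (m : Fin M) (g : Fin M → List α),
    (∀ m', m' ≠ m → g m' = []) → (List.ofFn g).flatten = g m := by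
  intro M
  induction M with
  | zero => intro m; exact m.elim0
  | succ M ih =>
    intro m g h
    rw [List.ofFn_succ, List.flatten_cons]
    by_cases hm : m = 0
    · subst hm
      have hrest : (List.ofFn fun k : Fin M => g k.succ).flatten = [] :=
        List.flatten_eq_nil_iff.mpr (by
          intro l hl
          obtain ⟨k, rfl⟩ := List.mem_ofFn.mp hl
          exact h k.succ (Fin.succ_ne_zero k))
      rw [hrest, List.append_nil]
    · obtain ⟨k, rfl⟩ := Fin.eq_succ_of_ne_zero hm
      rw [h 0 (Ne.symm (Fin.succ_ne_zero k)), List.nil_append]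
      exact ih k (fun m' => g m'.succ)
        (fun m' hm' => h m'.succ (fun e => hm' (Fin.succ_injective _ e)))


/-- The sum over all permutations consistent with the partitioned preference of the
PL probability equals
`∏_{m=1}^{M-1} [ Σ_{(j_1,…,j_{n_m}) ∈ σ(S_m)} ∏_l exp(w j_l) / (Σ_{k ∈ R_m} exp (w k) − Σ_{r<l} exp (w j_r)) ]`
with `R_m = ∪_{r ≥ m} S_r`. -/
theorem partitioned_preference_prob_eq_prod_explicit
    {N M : ℕ} (hM : 1 ≤ M) (w : Fin N → ℝ) (S : Fin M → Finset (Fin N))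
    (hdisj : ∀ m m' : Fin M, m ≠ m' → Disjoint (S m) (S m'))
    (hcover : Finset.univ.biUnion S = (Finset.univ : Finset (Fin N)))
    (hne : ∀ m : Fin M, (S m).Nonempty) :
    ((List.finRange N).permutations.map fun l =>
        if consistent S l then PLlist w l else 0).sum =
      ∏ m ∈ Finset.univ.filter (fun m : Fin M => (m : ℕ) < M - 1),
        ((S m).toList.permutations.map fun lj =>
            innerProd w
              (∑ k ∈ (Finset.univ.filter fun r : Fin M => m ≤ r).biUnion S,
                Real.exp (w k)) lj).sum := by
  have e := fun i => Real.exp (w i)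
  -- abbreviation for block denominators
  set Dm : Fin M → ℝ := fun m =>
    ∑ k ∈ (Finset.univ.filter fun r : Fin M => m ≤ r).biUnion S, Real.exp (w k) with hDm
  have hDmdef : ∀ m : Fin M, Dm m =
      ∑ k ∈ (Finset.univ.filter fun r : Fin M => m ≤ r).biUnion S, Real.exp (w k) :=
    fun _ => rfl
  have hpd : ∀ (t : Finset (Fin M)), (↑t : Set (Fin M)).PairwiseDisjoint S :=
    fun t m _ m' _ h => hdisj m m' h
  have hS_sum : ∀ (t : Finset (Fin M)),
      ∑ k ∈ t.biUnion S, Real.exp (w k) = ∑ m' ∈ t, ∑ k ∈ S m', Real.exp (w k) :=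
    fun t => Finset.sum_biUnion (hpd t)
  have htotal : ∑ k : Fin N, Real.exp (w k) = ∑ m' : Fin M, ∑ k ∈ S m', Real.exp (w k) := by
    rw [← hcover, hS_sum]
  have hDsub : ∀ m : Fin M,
      (∑ k : Fin N, Real.exp (w k)) -
        (∑ m' ∈ Finset.univ.filter (fun m' => m' < m), ∑ k ∈ S m', Real.exp (w k)) = Dm m := by
    intro m
    rw [hDmdef m, hS_sum]
    have hsplit := Finset.sum_filter_add_sum_filter_not (Finset.univ : Finset (Fin M))
      (fun m' => m' < m) (fun m' => ∑ k ∈ S m', Real.exp (w k))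
    have hfe : Finset.univ.filter (fun m' : Fin M => ¬ m' < m) =
        Finset.univ.filter (fun r : Fin M => m ≤ r) := by
      apply Finset.filter_congr
      intro m' _
      simp [not_lt]
    rw [htotal, ← hsplit, hfe]
    ring
  -- Step A: list sum to finset sum over consistent permutations
  have hnodupP : (List.finRange N).permutations.Nodup :=
    List.nodup_permutations _ (List.nodup_finRange N)
  have hperm0 : (List.finRange N).Perm (Finset.univ : Finset (Fin N)).toList := by
    refine List.perm_of_nodup_nodup_toFinset_eq (List.nodup_finRange N)
      (Finset.nodup_toList _) ?_
    ext x
    simp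
  have hTF : (List.finRange N).permutations.toFinset = permsF (Finset.univ : Finset (Fin N)) := by
    ext q
    rw [List.mem_toFinset, List.mem_permutations, mem_permsF]
    exact ⟨fun h => h.trans hperm0, fun h => h.trans hperm0.symm⟩
  rw [← List.sum_toFinset _ hnodupP, hTF, ← Finset.sum_filter]
  -- Step B: bijection with tuples of block permutations
  have key : ∑ p ∈ Fintype.piFinset (fun m => permsF (S m)),
        ∏ m : Fin M, innerProd w (Dm m) (p m)
      = ∑ q ∈ (permsF (Finset.univ : Finset (Fin N))).filter (consistent S),
          PLlist w q := by
    refine Finset.sum_nbij' (i := fun p => (List.ofFn p).flatten)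
      (j := fun q => fun m => q.filter (fun x => decide (x ∈ S m))) ?_ ?_ ?_ ?_ ?_
    · -- flatten lands in consistent permutations
      intro p hp
      rw [Fintype.mem_piFinset] at hp
      have hpm : ∀ m, (p m).Perm (S m).toList := fun m => mem_permsF.mp (hp m)
      have hmem : ∀ m x, x ∈ p m ↔ x ∈ S m := fun m x =>
        ((hpm m).mem_iff).trans (Finset.mem_toList)
      have hnd : ∀ m, (p m).Nodup := fun m =>
        ((hpm m).nodup_iff).mpr (Finset.nodup_toList _)
      rw [Finset.mem_filter, mem_permsF]
      exact ⟨flatten_perm_univ S p hmem hnd hdisj hcover,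
        fun m m' h i hi j hj => consistent_flatten M S p hmem hdisj m m' h i hi j hj⟩
    · -- filters land in the product set
      intro q hq
      rw [Finset.mem_filter, mem_permsF] at hq
      obtain ⟨hqp, _⟩ := hq
      have hqnd : q.Nodup := (hqp.nodup_iff).mpr (Finset.nodup_toList _)
      rw [Fintype.mem_piFinset]
      intro m
      rw [mem_permsF]
      refine List.perm_of_nodup_nodup_toFinset_eq
        ((List.filter_sublist (l := q)).nodup hqnd) (Finset.nodup_toList _) ?_
      rw [List.toFinset_filter, Finset.toList_toFinset]
      have hqTF : q.toFinset = Finset.univ := by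
        ext x
        simp [hqp.mem_iff.trans (Finset.mem_toList)]
      rw [hqTF]
      ext x
      simp
    · -- left inverse
      intro p hp
      rw [Fintype.mem_piFinset] at hp
      have hpm : ∀ m, (p m).Perm (S m).toList := fun m => mem_permsF.mp (hp m)
      have hmem : ∀ m x, x ∈ p m ↔ x ∈ S m := fun m x =>
        ((hpm m).mem_iff).trans (Finset.mem_toList)
      funext m
      show ((List.ofFn p).flatten.filter (fun x => decide (x ∈ S m))) = p m
      rw [List.filter_flatten, List.map_ofFn]
      have h1 : ((List.filter (fun x => decide (x ∈ S m)) ∘ p) m) = p m := by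
        simp only [Function.comp]
        rw [List.filter_eq_self]
        intro a ha
        simp [(hmem m a).mp ha]
      refine Eq.trans (flatten_eq_single M m _ ?_) h1
      intro m' hm'
      simp only [Function.comp]
      rw [List.filter_eq_nil_iff]
      intro a ha
      have haS : a ∈ S m' := (hmem m' a).mp ha
      simp only [decide_eq_true_eq]
      exact fun haSm => (Finset.disjoint_left.mp (hdisj m' m hm') haS) haSm
    · -- right inverse
      intro q hq
      rw [Finset.mem_filter, mem_permsF] at hq
      obtain ⟨hqp, hqc⟩ := hq
      have hqnd : q.Nodup := (hqp.nodup_iff).mpr (Finset.nodup_toList _)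
      have hqcov : ∀ x ∈ q, ∃ m, x ∈ S m := by
        intro x _
        have hx : x ∈ Finset.univ.biUnion S := hcover ▸ Finset.mem_univ x
        obtain ⟨m, _, hm⟩ := Finset.mem_biUnion.mp hx
        exact ⟨m, hm⟩
      exact (eq_flatten_of_consistent M S q hqnd hqcov hdisj
        (fun m m' h i hi j hj _ _ => hqc m m' h i hi j hj)).symm
    · -- values agree
      intro p hp
      rw [Fintype.mem_piFinset] at hp
      have hpm : ∀ m, (p m).Perm (S m).toList := fun m => mem_permsF.mp (hp m)
      have hmem : ∀ m x, x ∈ p m ↔ x ∈ S m := fun m x =>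
        ((hpm m).mem_iff).trans (Finset.mem_toList)
      have hnd : ∀ m, (p m).Nodup := fun m =>
        ((hpm m).nodup_iff).mpr (Finset.nodup_toList _)
      have hflat : (List.ofFn p).flatten.Perm (Finset.univ : Finset (Fin N)).toList :=
        flatten_perm_univ S p hmem hnd hdisj hcover
      rw [PL_eq_inner]
      have hsumflat : (((List.ofFn p).flatten).map fun i => Real.exp (w i)).sum
          = ∑ k : Fin N, Real.exp (w k) := by
        rw [(hflat.map _).sum_eq, Finset.sum_map_toList]
      rw [hsumflat, innerProd_flatten]
      refine Finset.prod_congr rfl ?_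
      intro m _
      congr 1
      rw [← hDsub m]
      congr 1
      refine Finset.sum_congr rfl ?_
      intro m' _
      rw [((hpm m').map _).sum_eq, Finset.sum_map_toList]
  rw [← key, ← Finset.prod_univ_sum]
  -- Step D: split off the last factor
  have hMpos : 0 < M := hM
  set lastIdx : Fin M := ⟨M - 1, by omega⟩ with hlast
  have hsplitset : Finset.univ.filter (fun m : Fin M => (m : ℕ) < M - 1)
      = Finset.univ.erase lastIdx := by
    ext m
    simp only [Finset.mem_filter, Finset.mem_erase, Finset.mem_univ, true_and, and_true]
    rw [hlast, Ne, Fin.ext_iff]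
    have := m.isLt
    simp only []
    omega
  have hfactor : ∑ l ∈ permsF (S lastIdx), innerProd w (Dm lastIdx) l = 1 := by
    have hfl : Finset.univ.filter (fun r : Fin M => lastIdx ≤ r) = {lastIdx} := by
      ext r
      simp only [Finset.mem_filter, Finset.mem_univ, true_and, Finset.mem_singleton]
      rw [hlast, Fin.le_def, Fin.ext_iff]
      have := r.isLt
      simp only []
      omega
    have hDlast : Dm lastIdx = ∑ k ∈ S lastIdx, Real.exp (w k) := by
      rw [hDmdef, hfl, Finset.singleton_biUnion]
    rw [hDlast]
    exact norm_sum w _ (S lastIdx) rfl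
  rw [← Finset.mul_prod_erase Finset.univ _ (Finset.mem_univ lastIdx), hfactor, one_mul,
    ← hsplitset]
  -- Step E: convert each factor's list sum to a finset sum
  refine Finset.prod_congr rfl ?_
  intro m _
  rw [← List.sum_toFinset _ (List.nodup_permutations _ (Finset.nodup_toList (S m)))]
  rfl
end

section
/- Let (g_i)_{i=1}^N be independent random variables with g_i ~ Gumbel(w_i) (CDF F_i(x) = exp(−exp(−(x − w_i)))). Then for any permutation (i_1,...,i_N) of {1,...,N}, P(g_{i_1} > g_{i_2} > ⋯ > g_{i_N}) = ∏_{j=1}^N exp(w_{i_j}) / Σ_{k=j}^N exp(w_{i_k}). -/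
open MeasureTheory ProbabilityTheory

/-- The Gumbel distribution with location parameter `w`: the measure on `ℝ`
with CDF `x ↦ exp(−exp(−(x − w)))`, given here by its density
`x ↦ exp(−(x−w)) · exp(−exp(−(x−w)))` with respect to Lebesgue measure. -/
noncomputable def gumbel (w : ℝ) : Measure ℝ :=
  volume.withDensity fun x =>
    ENNReal.ofReal (Real.exp (-(x - w)) * Real.exp (-Real.exp (-(x - w))))


open Real Set Filter
open scoped ENNReal

lemma gum_hasDerivAt (c x : ℝ) :
    HasDerivAt (fun x => Real.exp (-c * Real.exp (-x)))
      (c * Real.exp (-x) * Real.exp (-c * Real.exp (-x))) x := by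
  have h1 : HasDerivAt (fun x : ℝ => -x) (-1) x := by
    exact (hasDerivAt_id' x).neg
  have h2 : HasDerivAt (fun x : ℝ => Real.exp (-x)) (Real.exp (-x) * -1) x :=
    (Real.hasDerivAt_exp (-x)).comp x h1
  have h3 : HasDerivAt (fun x : ℝ => -c * Real.exp (-x)) (-c * (Real.exp (-x) * -1)) x :=
    h2.const_mul (-c)
  have h4 := (Real.hasDerivAt_exp (-c * Real.exp (-x))).comp x h3
  exact h4.congr_deriv (by ring)

lemma cube_le_exp {y : ℝ} (hy : 0 ≤ y) : y ^ 3 / 27 ≤ Real.exp y := by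
  have h1 : y / 3 ≤ Real.exp (y / 3) := by
    nlinarith [Real.add_one_le_exp (y / 3)]
  have h2 : (y / 3) ^ 3 ≤ (Real.exp (y / 3)) ^ 3 :=
    pow_le_pow_left₀ (by linarith) h1 3
  calc y ^ 3 / 27 = (y / 3) ^ 3 := by ring
    _ ≤ (Real.exp (y / 3)) ^ 3 := h2
    _ = Real.exp y := by
        rw [← Real.exp_nat_mul]; norm_num; ring_nf

lemma gum_nonneg (c x : ℝ) :
    0 ≤ c * Real.exp (-x) * Real.exp (-c * Real.exp (-x)) ∨ c ≤ 0 := by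
  rcases le_or_gt c 0 with h | h
  · exact Or.inr h
  · exact Or.inl (by positivity)

lemma integrableOn_gum {c : ℝ} (hc : 0 < c) (t : ℝ) :
    IntegrableOn (fun x => c * Real.exp (-x) * Real.exp (-c * Real.exp (-x))) (Iic t) := by
  have hcont : Continuous (fun x : ℝ => c * Real.exp (-x) * Real.exp (-c * Real.exp (-x))) := by
    continuity
  refine Integrable.mono' (g := fun x => (27 / c ^ 2 * Real.exp t) * Real.exp x)
    ((integrableOn_exp_Iic t).const_mul _) hcont.aestronglyMeasurable ?_
  filter_upwards [ae_restrict_mem measurableSet_Iic] with x (hx : x ≤ t)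
  have hnn : 0 ≤ c * Real.exp (-x) * Real.exp (-c * Real.exp (-x)) := by positivity
  rw [Real.norm_of_nonneg hnn]
  set u := Real.exp (-x) with hu
  have hu0 : 0 < u := Real.exp_pos _
  have e1 : Real.exp (-(c * u)) ≤ 27 / (c * u) ^ 3 := by
    have h := cube_le_exp (mul_nonneg hc.le hu0.le)
    rw [Real.exp_neg, inv_eq_one_div, div_le_div_iff₀ (Real.exp_pos _) (by positivity)]
    nlinarith [Real.exp_pos (c * u)]
  have hux : u * Real.exp x = 1 := by
    rw [hu, ← Real.exp_add]; simp
  have hxt : Real.exp x ≤ Real.exp t := Real.exp_le_exp.2 hx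
  have step1 : c * u * Real.exp (-c * u) ≤ c * u * (27 / (c * u) ^ 3) := by
    rw [neg_mul]
    exact mul_le_mul_of_nonneg_left e1 (by positivity)
  calc c * u * Real.exp (-c * u) ≤ c * u * (27 / (c * u) ^ 3) := step1
    _ = 27 / c ^ 2 * Real.exp x * Real.exp x := by
        have hexp : Real.exp x = 1 / u := eq_one_div_of_mul_eq_one_left (by rw [mul_comm] at hux; exact hux)
        rw [hexp]
        field_simp
    _ ≤ 27 / c ^ 2 * Real.exp t * Real.exp x := by
        have h2 : 0 ≤ 27 / c ^ 2 * Real.exp x := by positivity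
        nlinarith [Real.exp_pos x, Real.exp_pos t, sq_nonneg c]
    _ = _ := by ring

lemma tendsto_gum_atBot (c : ℝ) (hc : 0 < c) :
    Tendsto (fun x => Real.exp (-c * Real.exp (-x))) atBot (nhds 0) := by
  apply Real.tendsto_exp_atBot.comp
  have h1 : Tendsto (fun x : ℝ => Real.exp (-x)) atBot atTop :=
    Real.tendsto_exp_atTop.comp tendsto_neg_atBot_atTop
  exact (tendsto_const_mul_atBot_of_neg (by linarith)).2 h1

lemma integral_gum_Iic {c : ℝ} (hc : 0 < c) (t : ℝ) :
    ∫ x in Iic t, c * Real.exp (-x) * Real.exp (-c * Real.exp (-x)) =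
      Real.exp (-c * Real.exp (-t)) := by
  have h := integral_Iic_of_hasDerivAt_of_tendsto'
    (f := fun x => Real.exp (-c * Real.exp (-x)))
    (f' := fun x => c * Real.exp (-x) * Real.exp (-c * Real.exp (-x)))
    (fun x _ => gum_hasDerivAt c x) (integrableOn_gum hc t) (tendsto_gum_atBot c hc)
  rw [h, sub_zero]

lemma lintegral_gum_Iio {c : ℝ} (hc : 0 < c) (t : ℝ) :
    ∫⁻ x in Iio t, ENNReal.ofReal (c * Real.exp (-x) * Real.exp (-c * Real.exp (-x))) =
      ENNReal.ofReal (Real.exp (-c * Real.exp (-t))) := by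
  rw [Measure.restrict_congr_set Iio_ae_eq_Iic]
  rw [← ofReal_integral_eq_lintegral_ofReal (integrableOn_gum hc t)
    (Filter.Eventually.of_forall fun x => by positivity)]
  rw [integral_gum_Iic hc t]

lemma lintegral_gum {c : ℝ} (hc : 0 < c) :
    ∫⁻ x, ENNReal.ofReal (c * Real.exp (-x) * Real.exp (-c * Real.exp (-x))) = 1 := by
  have hmeas : Measurable (fun x => ENNReal.ofReal
      (c * Real.exp (-x) * Real.exp (-c * Real.exp (-x)))) := by
    apply ENNReal.measurable_ofReal.comp
    exact (by continuity : Continuous fun x : ℝ =>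
      c * Real.exp (-x) * Real.exp (-c * Real.exp (-x))).measurable
  set ν := volume.withDensity (fun x => ENNReal.ofReal
      (c * Real.exp (-x) * Real.exp (-c * Real.exp (-x)))) with hν
  have h1 : ∫⁻ x, ENNReal.ofReal (c * Real.exp (-x) * Real.exp (-c * Real.exp (-x))) = ν univ := by
    rw [hν, withDensity_apply _ MeasurableSet.univ, Measure.restrict_univ]
  rw [h1]
  have hU : (⋃ n : ℕ, Iio (n : ℝ)) = univ := by
    ext x; simp only [mem_iUnion, mem_Iio, mem_univ, iff_true]
    exact exists_nat_gt x
  have hmono : Monotone (fun n : ℕ => Iio (n : ℝ)) := fun a b hab =>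
    Iio_subset_Iio (by exact_mod_cast hab)
  have h2 : Tendsto (fun n : ℕ => ν (Iio (n : ℝ))) atTop (nhds (ν univ)) := by
    have := tendsto_measure_iUnion_atTop (μ := ν) hmono
    rwa [hU] at this
  have h3 : ∀ n : ℕ, ν (Iio (n : ℝ)) = ENNReal.ofReal (Real.exp (-c * Real.exp (-(n : ℝ)))) := by
    intro n
    rw [hν, withDensity_apply _ measurableSet_Iio]
    exact lintegral_gum_Iio hc _
  have h4 : Tendsto (fun n : ℕ => ν (Iio (n : ℝ))) atTop (nhds 1) := by
    simp_rw [h3]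
    have hexp : Tendsto (fun n : ℕ => Real.exp (-c * Real.exp (-(n : ℝ)))) atTop (nhds 1) := by
      have hin : Tendsto (fun n : ℕ => -c * Real.exp (-(n : ℝ))) atTop (nhds 0) := by
        have : Tendsto (fun n : ℕ => Real.exp (-(n : ℝ))) atTop (nhds 0) := by
          apply Real.tendsto_exp_atBot.comp
          exact tendsto_neg_atBot_iff.mpr tendsto_natCast_atTop_atTop
        simpa using this.const_mul (-c)
      simpa [Function.comp_def] using (Real.continuous_exp.tendsto 0).comp hin
    have := (ENNReal.continuous_ofReal.tendsto 1).comp hexp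
    simpa [Function.comp_def] using this
  exact tendsto_nhds_unique h2 h4

lemma gum_density_eq (w : ℝ) {S : ℝ} (x : ℝ) (hS : 0 ≤ S) :
    Real.exp (-(x - w)) * Real.exp (-Real.exp (-(x - w))) * Real.exp (-S * Real.exp (-x))
      = Real.exp w / (Real.exp w + S) *
        ((Real.exp w + S) * Real.exp (-x) * Real.exp (-(Real.exp w + S) * Real.exp (-x))) := by
  have h1 : Real.exp (-(x - w)) = Real.exp w * Real.exp (-x) := by
    rw [← Real.exp_add]; ring_nf
  have h2 : Real.exp (-(Real.exp w * Real.exp (-x))) * Real.exp (-S * Real.exp (-x))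
      = Real.exp (-(Real.exp w + S) * Real.exp (-x)) := by
    rw [← Real.exp_add]; ring_nf
  have hc : Real.exp w + S ≠ 0 := by positivity
  rw [h1, mul_assoc, h2]
  field_simp

lemma gum_density_measurable (w : ℝ) : Measurable fun x : ℝ =>
    ENNReal.ofReal (Real.exp (-(x - w)) * Real.exp (-Real.exp (-(x - w)))) := by
  apply ENNReal.measurable_ofReal.comp
  exact (by continuity : Continuous fun x : ℝ =>
    Real.exp (-(x - w)) * Real.exp (-Real.exp (-(x - w)))).measurable

lemma weight_measurable (S : ℝ) : Measurable fun x : ℝ =>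
    ENNReal.ofReal (Real.exp (-S * Real.exp (-x))) := by
  apply ENNReal.measurable_ofReal.comp
  exact (by continuity : Continuous fun x : ℝ => Real.exp (-S * Real.exp (-x))).measurable

lemma gumbel_lintegral_Iio (w t : ℝ) {S : ℝ} (hS : 0 ≤ S) :
    ∫⁻ a in Iio t, ENNReal.ofReal (Real.exp (-S * Real.exp (-a))) ∂gumbel w
      = ENNReal.ofReal (Real.exp w / (Real.exp w + S)) *
          ENNReal.ofReal (Real.exp (-(Real.exp w + S) * Real.exp (-t))) := by
  set c := Real.exp w + S with hcdef
  have hc : 0 < c := by positivity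
  rw [gumbel, restrict_withDensity measurableSet_Iio,
    lintegral_withDensity_eq_lintegral_mul _ (gum_density_measurable w) (weight_measurable S)]
  have hpt : ∀ x : ℝ, (fun x => ENNReal.ofReal
        (Real.exp (-(x - w)) * Real.exp (-Real.exp (-(x - w))))) x *
        ENNReal.ofReal (Real.exp (-S * Real.exp (-x)))
      = ENNReal.ofReal (Real.exp w / c) *
        ENNReal.ofReal (c * Real.exp (-x) * Real.exp (-c * Real.exp (-x))) := by
    intro x
    rw [← ENNReal.ofReal_mul (by positivity), ← ENNReal.ofReal_mul (by positivity),
      gum_density_eq w x hS]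
  simp only [Pi.mul_apply]
  simp_rw [hpt]
  rw [lintegral_const_mul _ (by
    apply ENNReal.measurable_ofReal.comp
    exact (by continuity : Continuous fun x : ℝ =>
      c * Real.exp (-x) * Real.exp (-c * Real.exp (-x))).measurable)]
  rw [lintegral_gum_Iio hc t]

lemma gumbel_lintegral (w : ℝ) {S : ℝ} (hS : 0 ≤ S) :
    ∫⁻ a, ENNReal.ofReal (Real.exp (-S * Real.exp (-a))) ∂gumbel w
      = ENNReal.ofReal (Real.exp w / (Real.exp w + S)) := by
  set c := Real.exp w + S with hcdef
  have hc : 0 < c := by positivity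
  rw [gumbel, lintegral_withDensity_eq_lintegral_mul _ (gum_density_measurable w)
    (weight_measurable S)]
  simp only [Pi.mul_apply]
  have hpt : ∀ x : ℝ, ENNReal.ofReal
        (Real.exp (-(x - w)) * Real.exp (-Real.exp (-(x - w)))) *
        ENNReal.ofReal (Real.exp (-S * Real.exp (-x)))
      = ENNReal.ofReal (Real.exp w / c) *
        ENNReal.ofReal (c * Real.exp (-x) * Real.exp (-c * Real.exp (-x))) := fun x => by
    rw [← ENNReal.ofReal_mul (by positivity), ← ENNReal.ofReal_mul (by positivity),
      gum_density_eq w x hS]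
  simp_rw [hpt]
  rw [lintegral_const_mul _ (by
    apply ENNReal.measurable_ofReal.comp
    exact (by continuity : Continuous fun x : ℝ =>
      c * Real.exp (-x) * Real.exp (-c * Real.exp (-x))).measurable)]
  rw [lintegral_gum hc, mul_one]

instance gumbel_isProbabilityMeasure (w : ℝ) : IsProbabilityMeasure (gumbel w) := by
  constructor
  have h := gumbel_lintegral w (le_refl 0)
  simp only [zero_mul, neg_zero, Real.exp_zero, ENNReal.ofReal_one, add_zero,
    div_self (Real.exp_pos w).ne'] at h
  calc gumbel w univ = ∫⁻ _, 1 ∂gumbel w := by rw [lintegral_one]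
    _ = 1 := h

def descSet (n : ℕ) : Set (Fin n → ℝ) := {x | ∀ j k, j < k → x k < x j}

lemma measurableSet_descSet (n : ℕ) : MeasurableSet (descSet n) := by
  have h : descSet n = ⋂ (j : Fin n) (k : Fin n), {x : Fin n → ℝ | j < k → x k < x j} := by
    ext x; simp [descSet, Set.mem_iInter]
  rw [h]
  refine MeasurableSet.iInter fun j => MeasurableSet.iInter fun k => ?_
  by_cases hjk : j < k
  · have : {x : Fin n → ℝ | j < k → x k < x j} = {x | x k < x j} := by ext x; simp [hjk]
    rw [this]
    exact measurableSet_lt (measurable_pi_apply k) (measurable_pi_apply j)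
  · have : {x : Fin n → ℝ | j < k → x k < x j} = univ := by ext x; simp [hjk]
    rw [this]; exact MeasurableSet.univ

lemma snoc_mem_descSet {n : ℕ} (y : Fin (n + 1) → ℝ) (a : ℝ) :
    Fin.snoc y a ∈ descSet (n + 2) ↔ y ∈ descSet (n + 1) ∧ a < y (Fin.last n) := by
  constructor
  · intro h
    refine ⟨fun j k hjk => ?_, ?_⟩
    · have := h j.castSucc k.castSucc (Fin.castSucc_lt_castSucc_iff.mpr hjk)
      simpa [Fin.snoc_castSucc] using this
    · have := h (Fin.last n).castSucc (Fin.last (n + 1)) (Fin.castSucc_lt_last _)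
      simpa [Fin.snoc_castSucc, Fin.snoc_last] using this
  · rintro ⟨hy, ha⟩ j k hjk
    by_cases hk : k = Fin.last (n + 1)
    · subst hk
      by_cases hj : j = Fin.last (n + 1)
      · exact absurd hjk (hj ▸ lt_irrefl _)
      · obtain ⟨j', rfl⟩ := Fin.exists_castSucc_eq.mpr hj
        simp only [Fin.snoc_castSucc, Fin.snoc_last]
        refine lt_of_lt_of_le ha ?_
        rcases eq_or_lt_of_le (Fin.le_last j') with h | h
        · rw [h]
        · exact (hy j' (Fin.last n) h).le
    · obtain ⟨k', rfl⟩ := Fin.exists_castSucc_eq.mpr hk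
      have hj : j ≠ Fin.last (n + 1) := fun hje => by
        exact absurd (hje ▸ hjk) (not_lt.mpr (Fin.le_last _))
      obtain ⟨j', rfl⟩ := Fin.exists_castSucc_eq.mpr hj
      simp only [Fin.snoc_castSucc]
      exact hy j' k' (Fin.castSucc_lt_castSucc_iff.mp hjk)

lemma sum_filter_castSucc {n : ℕ} (w : Fin (n + 2) → ℝ) (j : Fin (n + 1)) :
    ∑ k ∈ Finset.univ.filter (fun k : Fin (n + 2) => j.castSucc ≤ k), Real.exp (w k)
      = Real.exp (w (Fin.last (n + 1)))
        + ∑ k ∈ Finset.univ.filter (fun k : Fin (n + 1) => j ≤ k), Real.exp (w k.castSucc) := by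
  rw [Finset.sum_filter, Finset.sum_filter, Fin.sum_univ_castSucc]
  simp only [Fin.castSucc_le_castSucc_iff, Fin.le_last, if_true]
  ring

lemma sum_filter_last {n : ℕ} (w : Fin (n + 2) → ℝ) :
    ∑ k ∈ Finset.univ.filter (fun k : Fin (n + 2) => Fin.last (n + 1) ≤ k), Real.exp (w k)
      = Real.exp (w (Fin.last (n + 1))) := by
  rw [Finset.sum_filter]
  have h : ∀ k : Fin (n + 2), (Fin.last (n + 1) ≤ k) ↔ k = Fin.last (n + 1) :=
    fun k => Fin.last_le_iff
  simp_rw [h]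
  simp

lemma prod_PL {n : ℕ} (w : Fin (n + 2) → ℝ) (S : ℝ) :
    Real.exp (w (Fin.last (n + 1))) / (S + Real.exp (w (Fin.last (n + 1)))) *
      ∏ j : Fin (n + 1), Real.exp (w j.castSucc) /
        ((Real.exp (w (Fin.last (n + 1))) + S)
          + ∑ k ∈ Finset.univ.filter (fun k : Fin (n + 1) => j ≤ k), Real.exp (w k.castSucc))
    = ∏ j : Fin (n + 2), Real.exp (w j) /
        (S + ∑ k ∈ Finset.univ.filter (fun k : Fin (n + 2) => j ≤ k), Real.exp (w k)) := by
  rw [Fin.prod_univ_castSucc (n := n + 1) (fun j => Real.exp (w j) /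
    (S + ∑ k ∈ Finset.univ.filter (fun k : Fin (n + 2) => j ≤ k), Real.exp (w k)))]
  rw [sum_filter_last, mul_comm]
  congr 1
  apply Finset.prod_congr rfl
  intro j _
  rw [sum_filter_castSucc]
  ring_nf

lemma measurable_snoc_pair {n : ℕ} :
    Measurable (fun p : ℝ × (Fin (n + 1) → ℝ) => (Fin.snoc p.2 p.1 : Fin (n + 2) → ℝ)) := by
  apply measurable_pi_lambda
  intro i
  by_cases hi : i = Fin.last (n + 1)
  · subst hi
    simp only [Fin.snoc_last]
    exact measurable_fst
  · obtain ⟨i', rfl⟩ := Fin.exists_castSucc_eq.mpr hi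
    simp only [Fin.snoc_castSucc]
    exact (measurable_pi_apply i').comp measurable_snd

lemma claim (n : ℕ) : ∀ (w : Fin (n + 1) → ℝ) (S : ℝ), 0 ≤ S →
    ∫⁻ x in descSet (n + 1),
        ENNReal.ofReal (Real.exp (-S * Real.exp (-(x (Fin.last n)))))
        ∂(Measure.pi fun i => gumbel (w i))
      = ENNReal.ofReal (∏ j : Fin (n + 1), Real.exp (w j) /
          (S + ∑ k ∈ Finset.univ.filter (fun k : Fin (n + 1) => j ≤ k), Real.exp (w k))) := by
  induction n with
  | zero =>
    intro w S hS
    have hD : descSet 1 = univ := by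
      ext x
      simp only [descSet, mem_setOf_eq, mem_univ, iff_true]
      intro j k hjk
      exact absurd hjk (by omega)
    rw [hD, Measure.restrict_univ]
    have hMP := measurePreserving_funUnique (gumbel (w 0)) (Fin 1)
    have hg : Measurable fun a : ℝ => ENNReal.ofReal (Real.exp (-S * Real.exp (-a))) :=
      weight_measurable S
    have hpi : (Measure.pi fun i : Fin 1 => gumbel (w i)) = Measure.pi fun _ : Fin 1 => gumbel (w 0) := by
      congr 1 with i
      congr 1
      exact congrArg gumbel (congrArg w (Subsingleton.elim i 0))
    rw [hpi]
    have hcomp := hMP.lintegral_comp hg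
    have heq : ∀ x : Fin 1 → ℝ,
        ENNReal.ofReal (Real.exp (-S * Real.exp (-(x (Fin.last 0)))))
          = ENNReal.ofReal (Real.exp (-S * Real.exp (-(MeasurableEquiv.funUnique (Fin 1) ℝ x)))) := by
      intro x
      congr 2
    rw [show (∫⁻ x : Fin 1 → ℝ, ENNReal.ofReal (Real.exp (-S * Real.exp (-(x (Fin.last 0)))))
          ∂(Measure.pi fun _ : Fin 1 => gumbel (w 0)))
        = ∫⁻ x : Fin 1 → ℝ, ENNReal.ofReal
            (Real.exp (-S * Real.exp (-(MeasurableEquiv.funUnique (Fin 1) ℝ x))))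
          ∂(Measure.pi fun _ : Fin 1 => gumbel (w 0)) from lintegral_congr heq]
    refine hcomp.trans ?_
    rw [gumbel_lintegral (w 0) hS]
    congr 1
    rw [Fin.prod_univ_one]
    have : Finset.univ.filter (fun k : Fin 1 => (0 : Fin 1) ≤ k) = Finset.univ := by
      apply Finset.filter_true_of_mem
      intro k _
      exact Fin.zero_le k
    simp only [this]
    rw [Fin.sum_univ_one]
    ring
  | succ n ih =>
    intro w S hS
    set F : (Fin (n + 2) → ℝ) → ℝ≥0∞ :=
      fun x => ENNReal.ofReal (Real.exp (-S * Real.exp (-(x (Fin.last (n + 1)))))) with hF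
    have hFmeas : Measurable F :=
      (weight_measurable S).comp (measurable_pi_apply (Fin.last (n + 1)))
    have hHmeas : Measurable ((descSet (n + 2)).indicator F) :=
      hFmeas.indicator (measurableSet_descSet (n + 2))
    rw [← lintegral_indicator (measurableSet_descSet (n + 2)) F]
    have hMP := (measurePreserving_piFinSuccAbove
      (fun i : Fin (n + 2) => gumbel (w i)) (Fin.last (n + 1)))
    have hMPsymm := MeasurePreserving.symm _ hMP
    rw [← hMPsymm.lintegral_comp hHmeas]
    have hsymm_apply : ∀ p : ℝ × (Fin (n + 1) → ℝ),
        (MeasurableEquiv.piFinSuccAbove (fun _ : Fin (n + 2) => ℝ) (Fin.last (n + 1))).symm p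
          = Fin.snoc p.2 p.1 := by
      intro p
      show (Fin.insertNthEquiv (fun _ : Fin (n + 2) => ℝ) (Fin.last (n + 1))) p = _
      rw [Fin.insertNthEquiv_last]
      rfl
    calc ∫⁻ p, (descSet (n + 2)).indicator F
          ((MeasurableEquiv.piFinSuccAbove (fun _ : Fin (n + 2) => ℝ) (Fin.last (n + 1))).symm p)
          ∂((gumbel (w (Fin.last (n + 1)))).prod
            (Measure.pi fun j => gumbel (w ((Fin.last (n + 1)).succAbove j))))
        = ∫⁻ p : ℝ × (Fin (n + 1) → ℝ), (descSet (n + 2)).indicator F (Fin.snoc p.2 p.1)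
          ∂((gumbel (w (Fin.last (n + 1)))).prod
            (Measure.pi fun j => gumbel (w j.castSucc))) := by
          simp only [Fin.succAbove_last]
          exact lintegral_congr fun p => by rw [hsymm_apply]
      _ = ∫⁻ y, ∫⁻ a, (descSet (n + 2)).indicator F (Fin.snoc y a)
            ∂gumbel (w (Fin.last (n + 1)))
          ∂(Measure.pi fun j : Fin (n + 1) => gumbel (w j.castSucc)) := by
          exact lintegral_prod_symm _ (hHmeas.comp measurable_snoc_pair).aemeasurable
      _ = ∫⁻ y, (descSet (n + 1)).indicator (fun _ => (1 : ℝ≥0∞)) y *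
            (ENNReal.ofReal (Real.exp (w (Fin.last (n + 1))) / (Real.exp (w (Fin.last (n + 1))) + S)) *
             ENNReal.ofReal (Real.exp (-(Real.exp (w (Fin.last (n + 1))) + S) *
               Real.exp (-(y (Fin.last n))))))
          ∂(Measure.pi fun j : Fin (n + 1) => gumbel (w j.castSucc)) := by
          apply lintegral_congr
          intro y
          by_cases hy : y ∈ descSet (n + 1)
          · have hpt : ∀ a : ℝ, (descSet (n + 2)).indicator F (Fin.snoc y a)
                = (Iio (y (Fin.last n))).indicator
                    (fun a => ENNReal.ofReal (Real.exp (-S * Real.exp (-a)))) a := by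
              intro a
              by_cases ha : a < y (Fin.last n)
              · rw [Set.indicator_of_mem ((snoc_mem_descSet y a).mpr ⟨hy, ha⟩),
                  Set.indicator_of_mem (by exact ha : a ∈ Iio (y (Fin.last n)))]
                simp [hF, Fin.snoc_last]
              · rw [Set.indicator_of_notMem (fun hmem => ha ((snoc_mem_descSet y a).mp hmem).2),
                  Set.indicator_of_notMem (by exact ha : a ∉ Iio (y (Fin.last n)))]
            simp_rw [hpt]
            rw [lintegral_indicator measurableSet_Iio _,
              gumbel_lintegral_Iio (w (Fin.last (n + 1))) (y (Fin.last n)) hS,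
              Set.indicator_of_mem hy, one_mul]
          · have hpt : ∀ a : ℝ, (descSet (n + 2)).indicator F (Fin.snoc y a) = 0 := by
              intro a
              exact Set.indicator_of_notMem
                (fun hmem => hy ((snoc_mem_descSet y a).mp hmem).1) _
            simp_rw [hpt]
            rw [lintegral_zero, Set.indicator_of_notMem hy, zero_mul]
      _ = ENNReal.ofReal (Real.exp (w (Fin.last (n + 1))) / (Real.exp (w (Fin.last (n + 1))) + S)) *
          ∫⁻ y in descSet (n + 1),
            ENNReal.ofReal (Real.exp (-(Real.exp (w (Fin.last (n + 1))) + S) *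
              Real.exp (-(y (Fin.last n)))))
          ∂(Measure.pi fun j : Fin (n + 1) => gumbel (w j.castSucc)) := by
          rw [← lintegral_indicator (measurableSet_descSet (n + 1)) _]
          have hmeasw : Measurable fun y : Fin (n + 1) → ℝ =>
              (descSet (n + 1)).indicator (fun y => ENNReal.ofReal
                (Real.exp (-(Real.exp (w (Fin.last (n + 1))) + S) *
                  Real.exp (-(y (Fin.last n)))))) y := by
            apply Measurable.indicator ?_ (measurableSet_descSet (n + 1))
            exact (weight_measurable _).comp (measurable_pi_apply (Fin.last n))
          rw [← lintegral_const_mul _ hmeasw]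
          apply lintegral_congr
          intro y
          by_cases hy : y ∈ descSet (n + 1)
          · rw [Set.indicator_of_mem hy, Set.indicator_of_mem hy, one_mul]
          · rw [Set.indicator_of_notMem hy, Set.indicator_of_notMem hy, zero_mul, mul_zero]
      _ = ENNReal.ofReal (∏ j : Fin (n + 2), Real.exp (w j) /
            (S + ∑ k ∈ Finset.univ.filter (fun k : Fin (n + 2) => j ≤ k), Real.exp (w k))) := by
          rw [ih (fun j => w j.castSucc) (Real.exp (w (Fin.last (n + 1))) + S) (by positivity)]
          rw [← ENNReal.ofReal_mul (by positivity)]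
          congr 1
          rw [← prod_PL w S]
          ring_nf


/-- If `g i ~ Gumbel(w i)` independently, then for any permutation `σ` of the items,
`P(g (σ 1) > g (σ 2) > ⋯ > g (σ N))` is the Plackett-Luce probability
`∏_j exp(w (σ j)) / Σ_{k ≥ j} exp(w (σ k))`. -/
theorem gumbel_ranking_prob_eq_PL
    {Ω : Type*} [MeasureSpace Ω] [IsProbabilityMeasure (ℙ : Measure Ω)]
    {N : ℕ} (w : Fin N → ℝ) (g : Fin N → Ω → ℝ)
    (hmeas : ∀ i, Measurable (g i))
    (hindep : iIndepFun g ℙ)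
    (hdist : ∀ i, Measure.map (g i) ℙ = gumbel (w i))
    (σ : Equiv.Perm (Fin N)) :
    ℙ {ω | ∀ j k : Fin N, j < k → g (σ k) ω < g (σ j) ω} =
      ENNReal.ofReal
        (∏ j : Fin N,
          Real.exp (w (σ j)) /
            ∑ k ∈ Finset.univ.filter (fun k : Fin N => j ≤ k),
              Real.exp (w (σ k))) := by
  set Φ : Ω → (Fin N → ℝ) := fun ω j => g (σ j) ω with hΦ
  have hΦmeas : Measurable Φ := measurable_pi_lambda _ fun j => hmeas (σ j)
  have hmap : Measure.map Φ ℙ = Measure.pi fun j => gumbel (w (σ j)) := by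
    symm
    apply Measure.pi_eq
    intro s hs
    rw [Measure.map_apply hΦmeas (MeasurableSet.univ_pi hs)]
    have hpre : Φ ⁻¹' (Set.pi univ s) = ⋂ i, g i ⁻¹' s (σ.symm i) := by
      ext ω
      simp only [mem_preimage, Set.mem_pi, mem_univ, forall_true_left, mem_iInter, hΦ]
      constructor
      · intro h i
        have := h (σ.symm i)
        simpa using this
      · intro h j
        have := h (σ j)
        rwa [Equiv.symm_apply_apply] at this
    rw [hpre]
    have h1 : ℙ (⋂ i, g i ⁻¹' s (σ.symm i)) = ∏ i, ℙ (g i ⁻¹' s (σ.symm i)) := by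
      have h2 := hindep.measure_inter_preimage_eq_mul Finset.univ
        (sets := fun i => s (σ.symm i)) (fun i _ => hs (σ.symm i))
      simpa using h2
    rw [h1]
    have h3 : ∀ i, ℙ (g i ⁻¹' s (σ.symm i)) = gumbel (w i) (s (σ.symm i)) := fun i => by
      rw [← hdist i, Measure.map_apply (hmeas i) (hs (σ.symm i))]
    simp_rw [h3]
    calc ∏ i, gumbel (w i) (s (σ.symm i))
        = ∏ i, gumbel (w (σ (σ.symm i))) (s (σ.symm i)) := by
          apply Finset.prod_congr rfl
          intro i _
          rw [Equiv.apply_symm_apply]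
      _ = ∏ j, gumbel (w (σ j)) (s j) := Equiv.prod_comp σ.symm (fun j => gumbel (w (σ j)) (s j))
  have hset : {ω | ∀ j k : Fin N, j < k → g (σ k) ω < g (σ j) ω} = Φ ⁻¹' descSet N := rfl
  rw [hset, ← Measure.map_apply hΦmeas (measurableSet_descSet N), hmap]
  cases N with
  | zero =>
    have hD : descSet 0 = univ := by
      ext x
      simp only [descSet, mem_setOf_eq, mem_univ, iff_true]
      intro j
      exact j.elim0
    rw [hD]
    simp
  | succ n =>
    have h := claim n (fun j => w (σ j)) 0 le_rfl
    simp only [neg_zero, zero_mul, Real.exp_zero, ENNReal.ofReal_one, zero_add] at h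
    rw [setLIntegral_one] at h
    rw [h]
end

section
/- Let (g_i)_{i∈A∪B} be independent with g_i ~ Gumbel(w_i), where A and B are finite disjoint nonempty sets. Then P(min_{a∈A} g_a > max_{b∈B} g_b) = ∫_0^1 ∏_{a∈A} (1 − u^{exp(w_a − w_B)}) du, where w_B = log Σ_{b∈B} exp(w_b). -/
open MeasureTheory ProbabilityTheory

section Aux

open Set Filter Topology

private lemma hasDerivAt_G (w x : ℝ) :
    HasDerivAt (fun x => -Real.exp (-Real.exp (x + w)))
      (Real.exp (-(-x - w)) * Real.exp (-Real.exp (-(-x - w)))) x := by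
  have h1 : HasDerivAt (fun x : ℝ => x + w) 1 x := (hasDerivAt_id x).add_const w
  have h2 : HasDerivAt (fun x : ℝ => Real.exp (x + w)) (Real.exp (x + w)) x := by
    have h3 := (Real.hasDerivAt_exp (x + w)).comp x h1
    rw [mul_one] at h3
    exact h3
  have h4 : HasDerivAt (fun x : ℝ => Real.exp (-Real.exp (x + w)))
      (Real.exp (-Real.exp (x + w)) * -Real.exp (x + w)) x :=
    (Real.hasDerivAt_exp _).comp x h2.neg
  have h5 := h4.neg
  have he : -(-x - w) = x + w := by ring_nf
  have h6 : Real.exp (-(-x - w)) * Real.exp (-Real.exp (-(-x - w)))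
      = -(Real.exp (-Real.exp (x + w)) * -Real.exp (x + w)) := by
    rw [he]; ring_nf
  rw [h6]
  exact h5

private lemma gumbel_Iic (w t : ℝ) :
    gumbel w (Iic t) = ENNReal.ofReal (Real.exp (-Real.exp (-(t - w)))) := by
  have fnn : ∀ x : ℝ, 0 ≤ Real.exp (-(x - w)) * Real.exp (-Real.exp (-(x - w))) :=
    fun x => mul_nonneg (Real.exp_pos _).le (Real.exp_pos _).le
  have htend : Tendsto (fun x : ℝ => -Real.exp (-Real.exp (x + w))) atTop (𝓝 0) := by
    have h1 : Tendsto (fun x : ℝ => x + w) atTop atTop := tendsto_atTop_add_const_right _ w tendsto_id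
    have h2 : Tendsto (fun x : ℝ => -Real.exp (x + w)) atTop atBot :=
      tendsto_neg_atTop_atBot.comp (Real.tendsto_exp_atTop.comp h1)
    have h3 : Tendsto (fun x : ℝ => Real.exp (-Real.exp (x + w))) atTop (𝓝 0) :=
      Real.tendsto_exp_atBot.comp h2
    simpa using h3.neg
  have hcont : ContinuousWithinAt (fun x => -Real.exp (-Real.exp (x + w))) (Ici (-t)) (-t) :=
    (hasDerivAt_G w (-t)).continuousAt.continuousWithinAt
  have hint : IntegrableOn (fun x => Real.exp (-(-x - w)) * Real.exp (-Real.exp (-(-x - w)))) (Ioi (-t)) :=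
    integrableOn_Ioi_deriv_of_nonneg hcont (fun x _ => hasDerivAt_G w x) (fun x _ => fnn (-x)) htend
  have hval : ∫ x in Ioi (-t), Real.exp (-(-x - w)) * Real.exp (-Real.exp (-(-x - w)))
      = Real.exp (-Real.exp (-(t - w))) := by
    rw [integral_Ioi_of_hasDerivAt_of_tendsto hcont (fun x _ => hasDerivAt_G w x) hint htend]
    simp only [zero_sub, neg_neg]
    congr 2
    ring_nf
  have hIntIic : IntegrableOn (fun x => Real.exp (-(x - w)) * Real.exp (-Real.exp (-(x - w)))) (Iic t) := by
    have h_map_neg : ((volume : Measure ℝ).restrict (Ioi (-t))).map Neg.neg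
        = volume.restrict (Iic t) := by
      conv => rhs; rw [← Measure.map_neg_eq_self (volume : Measure ℝ),
        measurableEmbedding_neg.restrict_map]
      rw [show (Neg.neg ⁻¹' Iic t : Set ℝ) = Ici (-t) by simp, restrict_Ioi_eq_restrict_Ici]
    rw [IntegrableOn, ← h_map_neg, measurableEmbedding_neg.integrable_map_iff]
    exact hint
  have hIic : ∫ x in Iic t, Real.exp (-(x - w)) * Real.exp (-Real.exp (-(x - w)))
      = Real.exp (-Real.exp (-(t - w))) := by
    have hcn := integral_comp_neg_Iic t
      (fun x => Real.exp (-(-x - w)) * Real.exp (-Real.exp (-(-x - w))))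
    simp only [neg_neg] at hcn
    calc ∫ x in Iic t, Real.exp (-(x - w)) * Real.exp (-Real.exp (-(x - w)))
        = ∫ x in Ioi (-t), Real.exp (-(-x - w)) * Real.exp (-Real.exp (-(-x - w))) := by
          rw [← hcn]
      _ = Real.exp (-Real.exp (-(t - w))) := hval
  rw [gumbel, withDensity_apply _ measurableSet_Iic,
    ← ofReal_integral_eq_lintegral_ofReal hIntIic (Filter.Eventually.of_forall fnn), hIic]


private lemma finset_measurable_inf' {ι δ : Type*} [MeasurableSpace δ] {s : Finset ι}
    (hs : s.Nonempty) {f : ι → δ → ℝ} (hf : ∀ n ∈ s, Measurable (f n)) :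
    Measurable (s.inf' hs f) :=
  Finset.inf'_induction hs _ (fun _f hf _g hg => hf.inf hg) hf

private lemma sup'_attach_eq {ι : Type*} {s : Finset ι} (hs : s.Nonempty) (f : ι → ℝ) :
    s.attach.sup' (Finset.attach_nonempty_iff.mpr hs) (fun i => f i.1) = s.sup' hs f := by
  apply le_antisymm
  · exact Finset.sup'_le _ _ fun i _ => Finset.le_sup' f i.2
  · exact Finset.sup'_le _ _ fun b hb =>
      Finset.le_sup' (fun i : {x // x ∈ s} => f i.1) (s.mem_attach ⟨b, hb⟩)

private lemma inf'_attach_eq {ι : Type*} {s : Finset ι} (hs : s.Nonempty) (f : ι → ℝ) :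
    s.attach.inf' (Finset.attach_nonempty_iff.mpr hs) (fun i => f i.1) = s.inf' hs f := by
  apply le_antisymm
  · exact Finset.le_inf' _ _ fun b hb =>
      Finset.inf'_le (fun i : {x // x ∈ s} => f i.1) (s.mem_attach ⟨b, hb⟩)
  · exact Finset.le_inf' _ _ fun i _ => Finset.inf'_le f i.2

end Aux

open Set Filter Topology in
/-- For independent `g i ~ Gumbel(w i)` and disjoint nonempty finite sets `A`, `B`,
`P(min_{a∈A} g a > max_{b∈B} g b) = ∫_0^1 ∏_{a∈A} (1 − u^{exp(w a − w_B)}) du`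
where `w_B = log Σ_{b∈B} exp(w b)`. -/
theorem min_gumbel_gt_max_gumbel_prob
    {Ω : Type*} [MeasureSpace Ω] [IsProbabilityMeasure (ℙ : Measure Ω)]
    {ι : Type*} [DecidableEq ι] (w : ι → ℝ) (g : ι → Ω → ℝ)
    (A B : Finset ι) (hA : A.Nonempty) (hB : B.Nonempty) (hAB : Disjoint A B)
    (hmeas : ∀ i, Measurable (g i))
    (hindep : iIndepFun g ℙ)
    (hdist : ∀ i ∈ A ∪ B, Measure.map (g i) ℙ = gumbel (w i)) :
    ℙ {ω | B.sup' hB (fun b => g b ω) < A.inf' hA (fun a => g a ω)} =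
      ENNReal.ofReal
        (∫ u in (0:ℝ)..1,
          ∏ a ∈ A,
            (1 - u ^ Real.exp (w a - Real.log (∑ b ∈ B, Real.exp (w b))))) := by
  classical
  set S : ℝ := ∑ b ∈ B, Real.exp (w b) with hSdef
  have hSpos : 0 < S := Finset.sum_pos (fun b _ => Real.exp_pos _) hB
  set wB : ℝ := Real.log S with hwBdef
  have hexpwB : Real.exp wB = S := Real.exp_log hSpos
  set F : ℝ → ℝ := fun y => Real.exp (-Real.exp (-(y - wB))) with hFdef
  set Y : Ω → ℝ := fun ω => B.sup' hB fun b => g b ω with hYdef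
  set X : Ω → ℝ := fun ω => A.inf' hA fun a => g a ω with hXdef
  have hYm : Measurable Y := by
    have h : Y = B.sup' hB g := funext fun ω => (Finset.sup'_apply hB g ω).symm
    rw [h]; exact Finset.measurable_sup' hB fun b _ => hmeas b
  have hXm : Measurable X := by
    have h : X = A.inf' hA g := funext fun ω => (Finset.inf'_apply hA g ω).symm
    rw [h]; exact finset_measurable_inf' hA fun a _ => hmeas a
  have hFm : Measurable F := by
    fun_prop
  have hFpos : ∀ y, 0 < F y := fun y => Real.exp_pos _
  have hFlt1 : ∀ y, F y < 1 := by
    intro y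
    have h := Real.exp_lt_exp.mpr (neg_lt_zero.mpr (Real.exp_pos (-(y - wB))))
    rw [Real.exp_zero] at h
    exact h
  have hFmono : StrictMono F := by
    intro y z hyz
    exact Real.exp_lt_exp.mpr (neg_lt_neg (Real.exp_lt_exp.mpr (neg_lt_neg
      (sub_lt_sub_right hyz wB))))
  -- law of Y on Iic
  have hYlaw : ∀ t, Measure.map Y ℙ (Iic t) = ENNReal.ofReal (F t) := by
    intro t
    rw [Measure.map_apply hYm measurableSet_Iic]
    have hpre : Y ⁻¹' Iic t = ⋂ b ∈ B, g b ⁻¹' Iic t := by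
      ext ω
      simp [hYdef, Finset.sup'_le_iff]
    rw [hpre, hindep.measure_inter_preimage_eq_mul B (fun i _ => measurableSet_Iic)]
    have hb : ∀ b ∈ B, ℙ (g b ⁻¹' Iic t) = ENNReal.ofReal (Real.exp (-Real.exp (-(t - w b)))) := by
      intro b hbB
      rw [← Measure.map_apply (hmeas b) measurableSet_Iic, hdist b (Finset.mem_union_right A hbB),
        gumbel_Iic]
    rw [Finset.prod_congr rfl hb, ← ENNReal.ofReal_prod_of_nonneg
      (fun b _ => (Real.exp_pos _).le), ← Real.exp_sum]
    congr 1
    have hsum : ∑ b ∈ B, -Real.exp (-(t - w b)) = -Real.exp (-(t - wB)) := by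
      have h1 : ∀ b ∈ B, -Real.exp (-(t - w b)) = -(Real.exp (w b) * Real.exp (-t)) := by
        intro b _
        rw [← Real.exp_add]; congr 1; ring_nf
      rw [Finset.sum_congr rfl h1, Finset.sum_neg_distrib, ← Finset.sum_mul, ← hSdef, ← hexpwB,
        ← Real.exp_add]
      congr 2
      ring_nf
    rw [hsum]
  -- law of X on Ioi
  have hXlaw : ∀ y, Measure.map X ℙ (Ioi y)
      = ENNReal.ofReal (∏ a ∈ A, (1 - Real.exp (-Real.exp (-(y - w a))))) := by
    intro y
    rw [Measure.map_apply hXm measurableSet_Ioi]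
    have hpre : X ⁻¹' Ioi y = ⋂ a ∈ A, g a ⁻¹' Ioi y := by
      ext ω
      simp [hXdef, Finset.lt_inf'_iff]
    rw [hpre, hindep.measure_inter_preimage_eq_mul A (fun i _ => measurableSet_Ioi)]
    have hFle1 : ∀ (v : ℝ), Real.exp (-Real.exp v) ≤ 1 := by
      intro v
      have h := Real.exp_le_exp.mpr (neg_nonpos_of_nonneg (Real.exp_pos v).le)
      simpa [Real.exp_zero] using h
    have ha : ∀ a ∈ A, ℙ (g a ⁻¹' Ioi y)
        = ENNReal.ofReal (1 - Real.exp (-Real.exp (-(y - w a)))) := by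
      intro a haA
      haveI : IsProbabilityMeasure (Measure.map (g a) ℙ) :=
        Measure.isProbabilityMeasure_map (hmeas a).aemeasurable
      have hcompl := measure_compl (μ := Measure.map (g a) ℙ) (s := Iic y) measurableSet_Iic
        (measure_ne_top _ _)
      rw [compl_Iic, measure_univ] at hcompl
      rw [← Measure.map_apply (hmeas a) measurableSet_Ioi, hcompl,
        hdist a (Finset.mem_union_left B haA), gumbel_Iic, ← ENNReal.ofReal_one,
        ← ENNReal.ofReal_sub _ (Real.exp_pos _).le]
    rw [Finset.prod_congr rfl ha, ← ENNReal.ofReal_prod_of_nonneg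
      (fun a _ => sub_nonneg.mpr (hFle1 _))]
  -- independence of Y and X
  have hIndepYX : IndepFun Y X ℙ := by
    have hB' : B.attach.Nonempty := Finset.attach_nonempty_iff.mpr hB
    have hA' : A.attach.Nonempty := Finset.attach_nonempty_iff.mpr hA
    set φ : (↥B → ℝ) → ℝ := fun v => B.attach.sup' hB' fun i => v i with hφdef
    set ψ : (↥A → ℝ) → ℝ := fun v => A.attach.inf' hA' fun i => v i with hψdef
    have hφ : Measurable φ := by
      have hm := Finset.measurable_sup' hB' (f := fun (i : ↥B) (v : ↥B → ℝ) => v i)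
        (fun i _ => measurable_pi_apply i)
      have he : φ = B.attach.sup' hB' fun i (v : ↥B → ℝ) => v i :=
        funext fun v => (Finset.sup'_apply hB' (fun (i : ↥B) (v : ↥B → ℝ) => v i) v).symm
      rwa [he]
    have hψ : Measurable ψ := by
      have hm := finset_measurable_inf' hA' (f := fun (i : ↥A) (v : ↥A → ℝ) => v i)
        (fun i _ => measurable_pi_apply i)
      have he : ψ = A.attach.inf' hA' fun i (v : ↥A → ℝ) => v i :=
        funext fun v => (Finset.inf'_apply hA' (fun (i : ↥A) (v : ↥A → ℝ) => v i) v).symm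
      rwa [he]
    have h := (hindep.indepFun_finset B A hAB.symm hmeas).comp hφ hψ
    have h1 : (φ ∘ fun ω (i : ↥B) => g i ω) = Y := by
      funext ω
      exact sup'_attach_eq hB fun b => g b ω
    have h2 : (ψ ∘ fun ω (i : ↥A) => g i ω) = X := by
      funext ω
      exact inf'_attach_eq hA fun a => g a ω
    rwa [h1, h2] at h
  haveI hPY : IsProbabilityMeasure (Measure.map Y ℙ) := Measure.isProbabilityMeasure_map hYm.aemeasurable
  -- pushforward of Y's law under F is uniform on (0,1)
  have hmapF : Measure.map F (Measure.map Y ℙ) = volume.restrict (Ioo 0 1) := by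
    haveI : IsProbabilityMeasure (Measure.map F (Measure.map Y ℙ)) :=
      Measure.isProbabilityMeasure_map hFm.aemeasurable
    refine Measure.ext_of_Iic _ _ fun t => ?_
    rw [Measure.map_apply hFm measurableSet_Iic, Measure.restrict_apply measurableSet_Iic]
    rcases le_or_gt t 0 with ht0 | ht0
    · have h1 : F ⁻¹' Iic t = ∅ := by
        ext y
        simp only [mem_preimage, mem_Iic, mem_empty_iff_false, iff_false, not_le]
        exact lt_of_le_of_lt ht0 (hFpos y)
      have h2 : Iic t ∩ Ioo 0 1 = ∅ := by
        ext x
        simp only [mem_inter_iff, mem_Iic, mem_Ioo, mem_empty_iff_false, iff_false]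
        rintro ⟨hx1, hx2, -⟩
        exact absurd (lt_of_le_of_lt (hx1.trans ht0) hx2) (lt_irrefl _)
      rw [h1, h2]; simp
    · rcases le_or_gt 1 t with ht1 | ht1
      · have h1 : F ⁻¹' Iic t = univ := by
          ext y
          simp only [mem_preimage, mem_Iic, mem_univ, iff_true]
          exact (hFlt1 y).le.trans ht1
        have h2 : Iic t ∩ Ioo 0 1 = Ioo 0 1 := by
          ext x
          simp only [mem_inter_iff, mem_Iic, mem_Ioo]
          exact ⟨fun h => h.2, fun h => ⟨h.2.le.trans ht1, h⟩⟩
        rw [h1, h2, measure_univ, Real.volume_Ioo]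
        norm_num
      · -- 0 < t < 1
        set y₀ : ℝ := wB - Real.log (-Real.log t) with hy₀
        have hlogt : Real.log t < 0 := Real.log_neg ht0 ht1
        have hFy₀ : F y₀ = t := by
          have h1 : -(y₀ - wB) = Real.log (-Real.log t) := by rw [hy₀]; ring_nf
          rw [hFdef]
          simp only
          rw [h1, Real.exp_log (by linarith : (0:ℝ) < -Real.log t), neg_neg, Real.exp_log ht0]
        have h1 : F ⁻¹' Iic t = Iic y₀ := by
          ext y
          simp only [mem_preimage, mem_Iic]
          rw [← hFy₀]
          exact hFmono.le_iff_le
        have h2 : Iic t ∩ Ioo 0 1 = Ioc 0 t := by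
          ext x
          simp only [mem_inter_iff, mem_Iic, mem_Ioo, mem_Ioc]
          exact ⟨fun h => ⟨h.2.1, h.1⟩, fun h => ⟨h.2, h.1, lt_of_le_of_lt h.2 ht1⟩⟩
        rw [h1, h2, hYlaw y₀, hFy₀, Real.volume_Ioc, sub_zero]
  -- the integrand as a function of u
  have hcpos : ∀ a : ι, (0:ℝ) < Real.exp (w a - wB) := fun a => Real.exp_pos _
  set h : ℝ → ENNReal := fun u =>
    ENNReal.ofReal (∏ a ∈ A, (1 - u ^ Real.exp (w a - wB))) with hhdef
  have hhm : Measurable h := by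
    apply ENNReal.measurable_ofReal.comp
    apply Finset.measurable_prod
    intro a _
    exact measurable_const.sub (Real.continuous_rpow_const (hcpos a).le).measurable
  have hrpow : ∀ (a : ι) (y : ℝ),
      (F y) ^ Real.exp (w a - wB) = Real.exp (-Real.exp (-(y - w a))) := by
    intro a y
    rw [Real.rpow_def_of_pos (hFpos y), hFdef]
    simp only
    rw [Real.log_exp, neg_mul, ← Real.exp_add]
    congr 2
    ring_nf
  -- main computation
  have hset : MeasurableSet {p : ℝ × ℝ | p.1 < p.2} := measurableSet_lt measurable_fst measurable_snd
  calc ℙ {ω | Y ω < X ω}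
      = Measure.map (fun ω => (Y ω, X ω)) ℙ {p : ℝ × ℝ | p.1 < p.2} := by
        rw [Measure.map_apply (hYm.prodMk hXm) hset]
        rfl
    _ = (Measure.map Y ℙ).prod (Measure.map X ℙ) {p : ℝ × ℝ | p.1 < p.2} := by
        rw [(indepFun_iff_map_prod_eq_prod_map_map hYm.aemeasurable hXm.aemeasurable).mp hIndepYX]
    _ = ∫⁻ y, Measure.map X ℙ (Ioi y) ∂(Measure.map Y ℙ) := by
        rw [Measure.prod_apply hset]
        rfl
    _ = ∫⁻ y, h (F y) ∂(Measure.map Y ℙ) := by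
        refine lintegral_congr fun y => ?_
        rw [hXlaw y, hhdef]
        simp only
        congr 1
        exact (Finset.prod_congr rfl fun a _ => by rw [hrpow a y]).symm
    _ = ∫⁻ u, h u ∂(Measure.map F (Measure.map Y ℙ)) := (lintegral_map hhm hFm).symm
    _ = ∫⁻ u in Ioo (0:ℝ) 1, h u := by rw [hmapF]
    _ = ENNReal.ofReal (∫ u in Ioo (0:ℝ) 1, ∏ a ∈ A, (1 - u ^ Real.exp (w a - wB))) := by
        have hbound : ∀ u ∈ Ioo (0:ℝ) 1, 0 ≤ ∏ a ∈ A, (1 - u ^ Real.exp (w a - wB)) ∧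
            ∏ a ∈ A, (1 - u ^ Real.exp (w a - wB)) ≤ 1 := by
          intro u hu
          have hfac : ∀ a ∈ A, 0 ≤ 1 - u ^ Real.exp (w a - wB) ∧
              1 - u ^ Real.exp (w a - wB) ≤ 1 := by
            intro a _
            constructor
            · have := Real.rpow_le_one hu.1.le hu.2.le (hcpos a).le
              linarith
            · have := Real.rpow_nonneg hu.1.le (Real.exp (w a - wB))
              linarith
          exact ⟨Finset.prod_nonneg fun a ha => (hfac a ha).1,
            Finset.prod_le_one (fun a ha => (hfac a ha).1) fun a ha => (hfac a ha).2⟩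
        have hmeasprod : Measurable fun u : ℝ => ∏ a ∈ A, (1 - u ^ Real.exp (w a - wB)) := by
          apply Finset.measurable_prod
          intro a _
          exact measurable_const.sub (Real.continuous_rpow_const (hcpos a).le).measurable
        have hint : IntegrableOn (fun u : ℝ => ∏ a ∈ A, (1 - u ^ Real.exp (w a - wB))) (Ioo (0:ℝ) 1) := by
          refine Integrable.mono' (integrable_const 1) hmeasprod.aestronglyMeasurable ?_
          filter_upwards [ae_restrict_mem measurableSet_Ioo] with u hu
          rw [Real.norm_eq_abs, abs_of_nonneg (hbound u hu).1]
          exact (hbound u hu).2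
        have hnn : 0 ≤ᵐ[volume.restrict (Ioo (0:ℝ) 1)]
            fun u => ∏ a ∈ A, (1 - u ^ Real.exp (w a - wB)) := by
          filter_upwards [ae_restrict_mem measurableSet_Ioo] with u hu
          exact (hbound u hu).1
        rw [← ofReal_integral_eq_lintegral_ofReal hint hnn]
    _ = ENNReal.ofReal (∫ u in (0:ℝ)..1, ∏ a ∈ A, (1 - u ^ Real.exp (w a - wB))) := by
        rw [intervalIntegral.integral_of_le zero_le_one, integral_Ioc_eq_integral_Ioo]
end

section
/- Let S be a finite set, b = exp(w_i + c) > 0 for some i ∈ S, and a = exp(w_i + w_R + 2c) − 1 > b. Define g_0(v) = v^a log v / (1 − v^b) for v ∈ (0,1). Then lim_{v→1⁻} g_0(v) = −1/b, and |g_0(v)| ≤ 1/b for all v ∈ (0,1). -/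
/-- Let `b = exp(w_i + c) > 0` and `a = exp(w_i + w_R + 2c) − 1 > b`, and define
`g₀(v) = v^a log v / (1 − v^b)` on `(0,1)`. Then `g₀(v) → −1/b` as `v → 1⁻`,
and `|g₀(v)| ≤ 1/b` for all `v ∈ (0,1)`. -/
theorem g0_limit_and_bound
    (wi wR c a b : ℝ)
    (hb : b = Real.exp (wi + c))
    (ha : a = Real.exp (wi + wR + 2 * c) - 1)
    (hba : b < a) :
    Filter.Tendsto (fun v : ℝ => v ^ a * Real.log v / (1 - v ^ b))
        (nhdsWithin 1 (Set.Iio 1)) (nhds (-(1 / b))) ∧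
      ∀ v ∈ Set.Ioo (0:ℝ) 1, |v ^ a * Real.log v / (1 - v ^ b)| ≤ 1 / b := by
  have hb0 : 0 < b := hb ▸ Real.exp_pos _
  have ha0 : 0 < a := hb0.trans hba
  have hIoo : Set.Ioo (0:ℝ) 1 ∈ nhdsWithin 1 (Set.Iio 1) := by
    rw [show Set.Ioo (0:ℝ) 1 = Set.Ioi 0 ∩ Set.Iio 1 by ext x; simp [and_comm]]
    exact Filter.inter_mem (mem_nhdsWithin_of_mem_nhds (Ioi_mem_nhds one_pos))
      self_mem_nhdsWithin
  constructor
  · -- Limit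
    have hslope : Filter.Tendsto (slope Real.log 1) (nhdsWithin 1 {(1:ℝ)}ᶜ) (nhds 1) := by
      have := hasDerivAt_iff_tendsto_slope.mp (Real.hasDerivAt_log one_ne_zero)
      simpa using this
    have hpowb : Filter.Tendsto (fun v : ℝ => v ^ b) (nhdsWithin 1 (Set.Iio 1))
        (nhdsWithin 1 {(1:ℝ)}ᶜ) := by
      apply tendsto_nhdsWithin_of_tendsto_nhds_of_eventually_within
      · have hc : ContinuousAt (fun v : ℝ => v ^ b) 1 :=
          Real.continuousAt_rpow_const 1 b (Or.inl one_ne_zero)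
        have : (1:ℝ) ^ b = 1 := Real.one_rpow b
        simpa [this] using hc.tendsto.mono_left nhdsWithin_le_nhds
      · filter_upwards [hIoo] with v hv
        exact ne_of_lt (Real.rpow_lt_one hv.1.le hv.2 hb0)
    have hpowa : Filter.Tendsto (fun v : ℝ => v ^ a) (nhdsWithin 1 (Set.Iio 1)) (nhds 1) := by
      have hc : ContinuousAt (fun v : ℝ => v ^ a) 1 :=
        Real.continuousAt_rpow_const 1 a (Or.inl one_ne_zero)
      have : (1:ℝ) ^ a = 1 := Real.one_rpow a
      simpa [this] using hc.tendsto.mono_left nhdsWithin_le_nhds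
    have hmain : Filter.Tendsto
        (fun v : ℝ => v ^ a * (-(1 / b) * slope Real.log 1 (v ^ b)))
        (nhdsWithin 1 (Set.Iio 1)) (nhds (-(1 / b))) := by
      have := hpowa.mul ((tendsto_const_nhds (x := -(1/b))).mul (hslope.comp hpowb))
      simpa using this
    refine hmain.congr' ?_ |>.mono_left le_rfl
    filter_upwards [hIoo] with v hv
    have hv0 : 0 < v := hv.1
    have hvb1 : v ^ b < 1 := Real.rpow_lt_one hv0.le hv.2 hb0
    have hlogb : Real.log (v ^ b) = b * Real.log v := Real.log_rpow hv0 b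
    have hne : (1:ℝ) - v ^ b ≠ 0 := sub_ne_zero.mpr (ne_of_gt hvb1)
    rw [slope_def_field, hlogb]
    have hbb : -b + b * v ^ b ≠ 0 := by
      intro h0
      exact mul_ne_zero hb0.ne' (sub_ne_zero.mpr (ne_of_lt hvb1))
        (by linear_combination h0)
    field_simp
    rw [Real.log_one, ← neg_div, div_eq_iff (sub_ne_zero.mpr (ne_of_lt hvb1))]
    ring
  · -- Bound
    rintro v ⟨hv0, hv1⟩
    have hlog : Real.log v < 0 := Real.log_neg hv0 hv1
    have hvb1 : v ^ b < 1 := Real.rpow_lt_one hv0.le hv1 hb0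
    have hvb0 : 0 < v ^ b := Real.rpow_pos_of_pos hv0 b
    have hva0 : 0 < v ^ a := Real.rpow_pos_of_pos hv0 a
    have hsub : 0 < 1 - v ^ b := by linarith
    have hle : v ^ a ≤ v ^ b := Real.rpow_le_rpow_of_exponent_ge hv0 hv1.le hba.le
    -- key inequality: t * (-log t) ≤ 1 - t for t = v^b
    have hkey : v ^ b * (-(b * Real.log v)) ≤ 1 - v ^ b := by
      have h1 : Real.log (v ^ b)⁻¹ ≤ (v ^ b)⁻¹ - 1 :=
        Real.log_le_sub_one_of_pos (inv_pos.mpr hvb0)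
      rw [Real.log_inv, Real.log_rpow hv0] at h1
      have := mul_le_mul_of_nonneg_left h1 hvb0.le
      rw [mul_sub, mul_inv_cancel₀ (ne_of_gt hvb0)] at this
      linarith
    rw [abs_div, abs_of_pos hsub, abs_mul, abs_of_pos hva0, abs_of_neg hlog,
      div_le_div_iff₀ hsub hb0]
    have hstep : v ^ a * -Real.log v * b ≤ v ^ b * -Real.log v * b := by
      have h2 : (0:ℝ) ≤ -Real.log v * b := mul_nonneg (by linarith) hb0.le
      have := mul_le_mul_of_nonneg_right hle h2
      nlinarith
    nlinarith
end

section
/- Discretization error for the likelihood integral (Theorem 1(a)): assume constants c ∈ ℝ and C > 1 such that 2 < exp(w_{R_m} + c) < C for all m, and exp(w_i + c) ≤ C for all i. Then for any ε > 0 and each m, the composite midpoint rule with T ≥ C^2 (n_m + 1) / (2√3 ε) intervals approximates I_m = exp(w_{R_{m+1}} + c) ∫_0^1 v^{exp(w_{R_{m+1}}+c)−1} ∏_{i∈S_m} (1 − v^{exp(w_i + c)}) dv with total discretization error at most ε, where the error accounts for truncating the integral to [δ, 1] with δ = (ε/C)^{1/2} and applying the midpoint rule on [δ, 1]. -/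
/-- The composite midpoint rule with `T` equal subintervals for `∫_{x0}^{x1} f`. -/
noncomputable def midpointApprox (f : ℝ → ℝ) (x0 x1 : ℝ) (T : ℕ) : ℝ :=
  ((x1 - x0) / T) *
    ∑ k ∈ Finset.range T, f (x0 + ((k : ℝ) + 1 / 2) * ((x1 - x0) / T))

open intervalIntegral Set

lemma abs_integral_le_sq (u : ℝ → ℝ) (m x M : ℝ)
    (hb : ∀ t ∈ uIcc m x, |u t| ≤ M * |t - m|) :
    |∫ t in m..x, u t| ≤ M * (x - m)^2 / 2 := by
  have hMx : 0 ≤ M * (x - m)^2 := by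
    have h0 : 0 ≤ M * |x - m| := le_trans (abs_nonneg _) (hb x right_mem_uIcc)
    rcases le_or_gt 0 M with hM | hM
    · positivity
    · nlinarith [sq_abs (x - m), abs_nonneg (x - m)]
  rcases le_total m x with h | h
  · have hg : IntervalIntegrable (fun t => M * (t - m)) MeasureTheory.volume m x :=
      Continuous.intervalIntegrable (by continuity) m x
    have h1 : |∫ t in m..x, u t| ≤ |∫ t in m..x, M * (t - m)| := by
      rw [← Real.norm_eq_abs]
      apply norm_integral_le_abs_of_norm_le _ hg
      filter_upwards [MeasureTheory.ae_restrict_mem measurableSet_uIoc] with t ht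
      have ht' : t ∈ uIcc m x := uIoc_subset_uIcc ht
      have : m ≤ t := by rw [uIoc_of_le h] at ht; exact ht.1.le
      calc ‖u t‖ = |u t| := rfl
        _ ≤ M * |t - m| := hb t ht'
        _ = M * (t - m) := by rw [abs_of_nonneg (by linarith)]
    have h2 : (∫ t in m..x, M * (t - m)) = M * (x - m)^2 / 2 := by
      rw [intervalIntegral.integral_const_mul,
        intervalIntegral.integral_comp_sub_right (fun t => t) m, integral_id]
      ring
    rw [h2] at h1
    exact h1.trans_eq (abs_of_nonneg (by linarith))
  · have hg : IntervalIntegrable (fun t => M * (m - t)) MeasureTheory.volume x m :=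
      Continuous.intervalIntegrable (by continuity) x m
    rw [intervalIntegral.integral_symm, abs_neg]
    have h1 : |∫ t in x..m, u t| ≤ |∫ t in x..m, M * (m - t)| := by
      rw [← Real.norm_eq_abs]
      apply norm_integral_le_abs_of_norm_le _ hg
      filter_upwards [MeasureTheory.ae_restrict_mem measurableSet_uIoc] with t ht
      have ht' : t ∈ uIcc m x := by rw [uIcc_comm]; exact uIoc_subset_uIcc ht
      have : t ≤ m := by rw [uIoc_of_le h] at ht; exact ht.2
      calc ‖u t‖ = |u t| := rfl
        _ ≤ M * |t - m| := hb t ht'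
        _ = M * (m - t) := by rw [abs_of_nonpos (by linarith)]; ring
    have h2 : (∫ t in x..m, M * (m - t)) = M * (x - m)^2 / 2 := by
      rw [intervalIntegral.integral_const_mul,
        intervalIntegral.integral_comp_sub_left (fun t => t) m, integral_id]
      ring
    rw [h2] at h1
    exact h1.trans_eq (abs_of_nonneg (by linarith))

lemma midpoint_single (f f' f'' : ℝ → ℝ) (a b M : ℝ) (hab : a ≤ b)
    (hf : ∀ x ∈ Set.Icc a b, HasDerivAt f (f' x) x)
    (hf' : ∀ x ∈ Set.Icc a b, HasDerivAt f' (f'' x) x)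
    (hM : ∀ x ∈ Set.Icc a b, |f'' x| ≤ M) :
    |(∫ x in a..b, f x) - (b - a) * f ((a+b)/2)| ≤ M * (b-a)^3 / 24 := by
  set m := (a+b)/2 with hm
  have hmI : m ∈ Set.Icc a b := by constructor <;> (simp only [hm]; linarith)
  -- Lipschitz bound for f'
  have hLip : ∀ x ∈ Set.Icc a b, |f' x - f' m| ≤ M * |x - m| := by
    intro x hx
    have := Convex.norm_image_sub_le_of_norm_hasDerivWithin_le
      (f := f') (f' := f'') (s := Set.Icc a b)
      (fun y hy => (hf' y hy).hasDerivWithinAt)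
      (fun y hy => by rw [Real.norm_eq_abs]; exact hM y hy)
      (convex_Icc a b) hmI hx
    simpa [Real.norm_eq_abs] using this
  have hcf' : ContinuousOn f' (Set.Icc a b) :=
    fun y hy => ((hf' y hy).continuousAt).continuousWithinAt
  set g : ℝ → ℝ := fun x => f x - f m - f' m * (x - m) with hg
  have hq : ∀ x ∈ Set.Icc a b, |g x| ≤ M * (x - m)^2 / 2 := by
    intro x hx
    have hsub : Set.uIcc m x ⊆ Set.Icc a b := Set.uIcc_subset_Icc hmI hx
    have hgderiv : ∀ t ∈ Set.uIcc m x, HasDerivAt g (f' t - f' m) t := by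
      intro t ht
      have h1 : HasDerivAt (fun y => f y - f m) (f' t) t :=
        (hf t (hsub ht)).sub_const _
      have h2 : HasDerivAt (fun y => f' m * (y - m)) (f' m) t := by
        simpa using ((hasDerivAt_id t).sub_const m).const_mul (f' m)
      exact h1.sub h2
    have hint : IntervalIntegrable (fun t => f' t - f' m) MeasureTheory.volume m x :=
      ((hcf'.mono hsub).sub continuousOn_const).intervalIntegrable
    have heq : g x = ∫ t in m..x, (f' t - f' m) := by
      rw [integral_eq_sub_of_hasDerivAt hgderiv hint]
      simp [hg]
    rw [heq]
    exact abs_integral_le_sq _ _ _ _ (fun t ht => hLip t (hsub ht))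
  have hcf : ContinuousOn f (Set.Icc a b) :=
    fun y hy => ((hf y hy).continuousAt).continuousWithinAt
  have hintf : IntervalIntegrable f MeasureTheory.volume a b := by
    apply ContinuousOn.intervalIntegrable; rwa [Set.uIcc_of_le hab]
  have hxm : (∫ x in a..b, (x - m)) = 0 := by
    rw [integral_comp_sub_right (fun t => t) m, integral_id, hm]
    ring
  have hlin : IntervalIntegrable (fun x => f m + f' m * (x - m)) MeasureTheory.volume a b :=
    Continuous.intervalIntegrable
      (continuous_const.add (continuous_const.mul (continuous_id.sub continuous_const))) a b
  have hgint : (∫ x in a..b, g x) = (∫ x in a..b, f x) - (b - a) * f m := by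
    have e1 : (∫ x in a..b, g x)
        = (∫ x in a..b, f x) - ∫ x in a..b, (f m + f' m * (x - m)) := by
      rw [← integral_sub hintf hlin]
      congr 1; ext x; simp only [hg]; ring
    rw [e1, integral_add intervalIntegrable_const
        (Continuous.intervalIntegrable
          ((by fun_prop : Continuous fun x : ℝ => f' m * (x - m))) a b),
      integral_const_mul, hxm, integral_const]
    simp only [smul_eq_mul, mul_zero]
    ring
  have hbound : |∫ x in a..b, g x| ≤ M * (b-a)^3 / 24 := by
    have hgq : IntervalIntegrable (fun x => M * (x - m)^2 / 2) MeasureTheory.volume a b :=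
      Continuous.intervalIntegrable
        ((continuous_const.mul ((continuous_id.sub continuous_const).pow 2)).div_const 2) a b
    have h1 : |∫ x in a..b, g x| ≤ |∫ x in a..b, M * (x - m)^2 / 2| := by
      rw [← Real.norm_eq_abs]
      apply norm_integral_le_abs_of_norm_le _ hgq
      filter_upwards [MeasureTheory.ae_restrict_mem measurableSet_uIoc] with t ht
      have ht' : t ∈ Set.Icc a b := by
        rw [Set.uIoc_of_le hab] at ht; exact ⟨ht.1.le, ht.2⟩
      exact hq t ht'
    have h2 : (∫ x in a..b, M * (x - m)^2 / 2) = M * (b-a)^3 / 24 := by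
      have e2 : (∫ x in a..b, M * (x - m)^2 / 2) = (M/2) * ∫ x in a..b, (x - m)^2 := by
        rw [← integral_const_mul]
        congr 1; ext x; ring
      rw [e2, integral_comp_sub_right (fun t => t^2) m, integral_pow, hm]
      ring
    rw [h2] at h1
    refine h1.trans_eq (abs_of_nonneg ?_)
    have h3 : 0 ≤ M := (abs_nonneg _).trans (hM m hmI)
    have h4 : 0 ≤ b - a := by linarith
    positivity
  rw [← hgint]
  exact hbound



lemma midpoint_composite (f f' f'' : ℝ → ℝ) (a b M : ℝ) (T : ℕ) (hT : 0 < T) (hab : a ≤ b)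
    (hf : ∀ x ∈ Set.Icc a b, HasDerivAt f (f' x) x)
    (hf' : ∀ x ∈ Set.Icc a b, HasDerivAt f' (f'' x) x)
    (hM : ∀ x ∈ Set.Icc a b, |f'' x| ≤ M) :
    |(∫ x in a..b, f x) - midpointApprox f a b T| ≤ M * (b-a)^3 / (24 * T^2) := by
  have hT0 : (0:ℝ) < T := by exact_mod_cast hT
  set h : ℝ := (b - a) / T with hh
  have hh0 : 0 ≤ h := div_nonneg (by linarith) hT0.le
  set xp : ℕ → ℝ := fun k => a + k * h with hxp
  have hxdiff : ∀ k : ℕ, xp (k+1) - xp k = h := by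
    intro k; simp only [hxp]; push_cast; ring
  have hxmono : ∀ k : ℕ, xp k ≤ xp (k+1) := by
    intro k; nlinarith [hxdiff k]
  have hxT : xp T = b := by
    simp only [hxp, hh]; field_simp; ring
  have hsub : ∀ k : ℕ, k < T → Set.Icc (xp k) (xp (k+1)) ⊆ Set.Icc a b := by
    intro k hk
    apply Set.Icc_subset_Icc
    · simp only [hxp]; nlinarith [Nat.cast_nonneg (α := ℝ) k]
    · rw [← hxT]; simp only [hxp]
      have : ((k:ℝ)+1) ≤ (T:ℝ) := by exact_mod_cast hk
      push_cast
      nlinarith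
  have hcf : ContinuousOn f (Set.Icc a b) :=
    fun y hy => ((hf y hy).continuousAt).continuousWithinAt
  have hint : ∀ k < T, IntervalIntegrable f MeasureTheory.volume (xp k) (xp (k+1)) := by
    intro k hk
    apply ContinuousOn.intervalIntegrable
    rw [Set.uIcc_of_le (hxmono k)]
    exact hcf.mono (hsub k hk)
  have hsum : (∫ x in a..b, f x) = ∑ k ∈ Finset.range T, ∫ x in xp k..xp (k+1), f x := by
    rw [intervalIntegral.sum_integral_adjacent_intervals hint, hxT]
    norm_num [hxp]
  have hmid : midpointApprox f a b T
      = ∑ k ∈ Finset.range T, h * f ((xp k + xp (k+1))/2) := by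
    rw [midpointApprox, Finset.mul_sum]
    apply Finset.sum_congr rfl
    intro k _
    congr 1
    congr 1; simp only [hxp, hh]; push_cast; ring
  rw [hsum, hmid, ← Finset.sum_sub_distrib]
  calc |∑ k ∈ Finset.range T, ((∫ x in xp k..xp (k+1), f x) - h * f ((xp k + xp (k+1))/2))|
      ≤ ∑ k ∈ Finset.range T, |(∫ x in xp k..xp (k+1), f x) - h * f ((xp k + xp (k+1))/2)| :=
        Finset.abs_sum_le_sum_abs _ _
    _ ≤ ∑ k ∈ Finset.range T, M * h^3 / 24 := by
        apply Finset.sum_le_sum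
        intro k hk
        have hk' := Finset.mem_range.mp hk
        have := midpoint_single f f' f'' (xp k) (xp (k+1)) M (hxmono k)
          (fun x hx => hf x (hsub k hk' hx))
          (fun x hx => hf' x (hsub k hk' hx))
          (fun x hx => hM x (hsub k hk' hx))
        rw [hxdiff k] at this
        exact this
    _ = M * (b-a)^3 / (24 * T^2) := by
        rw [Finset.sum_const, Finset.card_range, nsmul_eq_mul, hh]
        field_simp


noncomputable def Pfun {ι : Type*} (S : Finset ι) (b : ι → ℝ) (v : ℝ) : ℝ :=
  ∏ i ∈ S, (1 - v ^ b i)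

noncomputable def Qfun {ι : Type*} [DecidableEq ι] (S : Finset ι) (b : ι → ℝ) (v : ℝ) : ℝ :=
  ∑ i ∈ S, (b i * v ^ (b i - 1)) * Pfun (S.erase i) b v

noncomputable def Rfun {ι : Type*} [DecidableEq ι] (S : Finset ι) (b : ι → ℝ) (v : ℝ) : ℝ :=
  ∑ i ∈ S, ((b i * (b i - 1) * v ^ (b i - 2)) * Pfun (S.erase i) b v
      - (b i * v ^ (b i - 1)) * Qfun (S.erase i) b v)

lemma rpow_le_inv_of_le {δ v r : ℝ} (hδ : 0 < δ) (h1 : δ ≤ v) (h2 : v ≤ 1) (hr : -1 ≤ r) :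
    v ^ r ≤ δ⁻¹ := by
  have hv0 : 0 < v := lt_of_lt_of_le hδ h1
  calc v ^ r ≤ v ^ (-1 : ℝ) := Real.rpow_le_rpow_of_exponent_ge hv0 h2 hr
    _ = v⁻¹ := by rw [Real.rpow_neg_one]
    _ ≤ δ⁻¹ := by exact inv_anti₀ hδ h1

lemma rpow_le_inv_sq_of_le {δ v r : ℝ} (hδ : 0 < δ) (h1 : δ ≤ v) (h2 : v ≤ 1) (hr : -2 ≤ r) :
    v ^ r ≤ (δ ^ 2)⁻¹ := by
  have hv0 : 0 < v := lt_of_lt_of_le hδ h1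
  calc v ^ r ≤ v ^ (-2 : ℝ) := Real.rpow_le_rpow_of_exponent_ge hv0 h2 hr
    _ = (v ^ 2)⁻¹ := by
        rw [show (-2 : ℝ) = -(2:ℕ) by norm_num, Real.rpow_neg hv0.le, Real.rpow_natCast]
    _ ≤ (δ ^ 2)⁻¹ := by
        apply inv_anti₀ (by positivity)
        nlinarith

lemma rpow_nonneg' {v r : ℝ} (hv : 0 ≤ v) : 0 ≤ v ^ r := Real.rpow_nonneg hv r

section
variable {ι : Type*} [DecidableEq ι] {S : Finset ι} {b : ι → ℝ} {C δ v : ℝ}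

lemma Pfun_nonneg (hb : ∀ i ∈ S, 0 ≤ b i) (hv0 : 0 ≤ v) (hv1 : v ≤ 1) :
    0 ≤ Pfun S b v :=
  Finset.prod_nonneg fun i hi => by
    have := Real.rpow_le_one hv0 hv1 (hb i hi); linarith

lemma Pfun_le_one (hb : ∀ i ∈ S, 0 ≤ b i) (hv0 : 0 ≤ v) (hv1 : v ≤ 1) :
    Pfun S b v ≤ 1 :=
  Finset.prod_le_one
    (fun i hi => by have := Real.rpow_le_one hv0 hv1 (hb i hi); linarith)
    (fun i hi => by have := Real.rpow_nonneg hv0 (b i); linarith)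

lemma abs_Pfun_le_one (hb : ∀ i ∈ S, 0 ≤ b i) (hv0 : 0 ≤ v) (hv1 : v ≤ 1) :
    |Pfun S b v| ≤ 1 := by
  rw [abs_of_nonneg (Pfun_nonneg hb hv0 hv1)]
  exact Pfun_le_one hb hv0 hv1

lemma abs_Qfun_le (hb : ∀ i ∈ S, 0 < b i) (hbC : ∀ i ∈ S, b i ≤ C)
    (hδ : 0 < δ) (hv : δ ≤ v) (hv1 : v ≤ 1) :
    |Qfun S b v| ≤ S.card * (C * δ⁻¹) := by
  have hv0 : 0 ≤ v := (hδ.trans_le hv).le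
  calc |Qfun S b v| ≤ ∑ i ∈ S, |(b i * v ^ (b i - 1)) * Pfun (S.erase i) b v| :=
        Finset.abs_sum_le_sum_abs _ _
    _ ≤ ∑ i ∈ S, C * δ⁻¹ := by
        apply Finset.sum_le_sum
        intro i hi
        rw [abs_mul]
        have hC0 : (0:ℝ) < C := lt_of_lt_of_le (hb i hi) (hbC i hi)
        have h1 : |b i * v ^ (b i - 1)| ≤ C * δ⁻¹ := by
          rw [abs_of_nonneg (mul_nonneg (hb i hi).le (rpow_nonneg' hv0))]
          apply mul_le_mul (hbC i hi)
            (rpow_le_inv_of_le hδ hv hv1 (by have := (hb i hi).le; linarith))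
            (by positivity)
            ((hb i hi).le.trans (hbC i hi))
        have h2 : |Pfun (S.erase i) b v| ≤ 1 :=
          abs_Pfun_le_one (fun j hj => (hb j (Finset.erase_subset _ _ hj)).le) hv0 hv1
        calc |b i * v ^ (b i - 1)| * |Pfun (S.erase i) b v|
            ≤ (C * δ⁻¹) * 1 := by
              apply mul_le_mul h1 h2 (abs_nonneg _) (by positivity)
          _ = C * δ⁻¹ := by ring
    _ = S.card * (C * δ⁻¹) := by rw [Finset.sum_const, nsmul_eq_mul]

lemma abs_Rfun_le (hb : ∀ i ∈ S, 0 < b i) (hbC : ∀ i ∈ S, b i ≤ C) (hC2 : 2 ≤ C)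
    (hδ : 0 < δ) (hδ1 : δ ≤ 1) (hv : δ ≤ v) (hv1 : v ≤ 1) :
    |Rfun S b v| ≤ S.card * (C * (C-1) * (δ^2)⁻¹)
      + S.card * (((S.card : ℝ) - 1) * (C^2 * (δ^2)⁻¹)) := by
  have hv0 : 0 ≤ v := (hδ.trans_le hv).le
  calc |Rfun S b v|
      ≤ ∑ i ∈ S, |(b i * (b i - 1) * v ^ (b i - 2)) * Pfun (S.erase i) b v
          - (b i * v ^ (b i - 1)) * Qfun (S.erase i) b v| := Finset.abs_sum_le_sum_abs _ _
    _ ≤ ∑ i ∈ S, (C * (C-1) * (δ^2)⁻¹ + ((S.card : ℝ) - 1) * (C^2 * (δ^2)⁻¹)) := by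
        apply Finset.sum_le_sum
        intro i hi
        have hbi := hb i hi
        have hbiC := hbC i hi
        have hA : |(b i * (b i - 1) * v ^ (b i - 2)) * Pfun (S.erase i) b v|
            ≤ C * (C-1) * (δ^2)⁻¹ := by
          rw [abs_mul, abs_mul, abs_mul]
          have e1 : |b i| ≤ C := by rw [abs_of_pos hbi]; exact hbiC
          have e2 : |b i - 1| ≤ C - 1 := by
            rw [abs_le]; constructor <;> nlinarith
          have e3 : |v ^ (b i - 2)| ≤ (δ^2)⁻¹ := by
            rw [abs_of_nonneg (rpow_nonneg' hv0)]
            exact rpow_le_inv_sq_of_le hδ hv hv1 (by linarith)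
          have e4 : |Pfun (S.erase i) b v| ≤ 1 :=
            abs_Pfun_le_one (fun j hj => (hb j (Finset.erase_subset _ _ hj)).le) hv0 hv1
          have h5 : |b i| * |b i - 1| * |v ^ (b i - 2)| * |Pfun (S.erase i) b v|
              ≤ C * (C - 1) * (δ^2)⁻¹ * 1 := by
            have c1 : (0:ℝ) ≤ C - 1 := by linarith
            have := mul_le_mul (mul_le_mul (mul_le_mul e1 e2 (abs_nonneg _) (by linarith))
              e3 (abs_nonneg _) (by positivity)) e4 (abs_nonneg _) (by positivity)
            exact this
          calc |b i| * |b i - 1| * |v ^ (b i - 2)| * |Pfun (S.erase i) b v|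
              ≤ C * (C - 1) * (δ^2)⁻¹ * 1 := h5
            _ = C * (C-1) * (δ^2)⁻¹ := by ring
        have hB : |(b i * v ^ (b i - 1)) * Qfun (S.erase i) b v|
            ≤ ((S.card : ℝ) - 1) * (C^2 * (δ^2)⁻¹) := by
          rw [abs_mul]
          have h1 : |b i * v ^ (b i - 1)| ≤ C * δ⁻¹ := by
            rw [abs_of_nonneg (mul_nonneg hbi.le (rpow_nonneg' hv0))]
            apply mul_le_mul hbiC (rpow_le_inv_of_le hδ hv hv1 (by linarith))
              (by positivity) (hbi.le.trans hbiC)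
          have h2 : |Qfun (S.erase i) b v| ≤ ((S.card : ℝ) - 1) * (C * δ⁻¹) := by
            have := abs_Qfun_le (S := S.erase i)
              (fun j hj => hb j (Finset.erase_subset _ _ hj))
              (fun j hj => hbC j (Finset.erase_subset _ _ hj)) hδ hv hv1
            rwa [Finset.card_erase_of_mem hi, Nat.cast_sub (Finset.card_pos.mpr ⟨i, hi⟩),
              Nat.cast_one] at this
          have hC0 : (0:ℝ) < C := by linarith
          have hn1 : (0:ℝ) ≤ (S.card : ℝ) - 1 := by
            have : 1 ≤ S.card := Finset.card_pos.mpr ⟨i, hi⟩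
            have : (1:ℝ) ≤ S.card := by exact_mod_cast this
            linarith
          calc |b i * v ^ (b i - 1)| * |Qfun (S.erase i) b v|
              ≤ (C * δ⁻¹) * (((S.card : ℝ) - 1) * (C * δ⁻¹)) := by
                apply mul_le_mul h1 h2 (abs_nonneg _) (by positivity)
            _ = ((S.card : ℝ) - 1) * (C^2 * (δ^2)⁻¹) := by
                field_simp
          
        calc |(b i * (b i - 1) * v ^ (b i - 2)) * Pfun (S.erase i) b v
              - (b i * v ^ (b i - 1)) * Qfun (S.erase i) b v|
            ≤ |(b i * (b i - 1) * v ^ (b i - 2)) * Pfun (S.erase i) b v|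
              + |(b i * v ^ (b i - 1)) * Qfun (S.erase i) b v| := abs_sub _ _
          _ ≤ C * (C-1) * (δ^2)⁻¹ + ((S.card : ℝ) - 1) * (C^2 * (δ^2)⁻¹) := by
              linarith
    _ = S.card * (C * (C-1) * (δ^2)⁻¹) + S.card * (((S.card : ℝ) - 1) * (C^2 * (δ^2)⁻¹)) := by
        rw [Finset.sum_const, nsmul_eq_mul]; ring

end

section
variable {ι : Type*} [DecidableEq ι] (S : Finset ι) (b : ι → ℝ) {x : ℝ}

lemma hasDerivAt_Pfun (hx : 0 < x) :
    HasDerivAt (Pfun S b) (-(Qfun S b x)) x := by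
  have h := HasDerivAt.fun_finset_prod (u := S) (f := fun i v => 1 - v ^ b i)
    (f' := fun i => -(b i * x ^ (b i - 1))) (x := x)
    (fun i _ => (Real.hasDerivAt_rpow_const (Or.inl hx.ne')).const_sub 1)
  refine h.congr_deriv ?_
  rw [Qfun, ← Finset.sum_neg_distrib]
  apply Finset.sum_congr rfl
  intro i _
  simp only [smul_eq_mul, Pfun]
  ring

lemma hasDerivAt_Qfun (hx : 0 < x) :
    HasDerivAt (Qfun S b) (Rfun S b x) x := by
  apply HasDerivAt.fun_sum
  intro i _
  have h1 : HasDerivAt (fun v : ℝ => b i * v ^ (b i - 1))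
      (b i * ((b i - 1) * x ^ (b i - 1 - 1))) x :=
    (Real.hasDerivAt_rpow_const (Or.inl hx.ne')).const_mul (b i)
  have h3 := h1.fun_mul (hasDerivAt_Pfun (S.erase i) b hx)
  have he : b i - 1 - 1 = b i - 2 := by ring
  rw [he] at h3
  refine h3.congr_deriv ?_
  ring

lemma hasDerivAt_Ffun (β : ℝ) (hx : 0 < x) :
    HasDerivAt (fun v => β * (v ^ (β - 1) * Pfun S b v))
      (β * ((β - 1) * x ^ (β - 2) * Pfun S b x - x ^ (β - 1) * Qfun S b x)) x := by
  have h1 : HasDerivAt (fun v : ℝ => v ^ (β - 1)) ((β - 1) * x ^ (β - 1 - 1)) x :=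
    Real.hasDerivAt_rpow_const (Or.inl hx.ne')
  have h := (h1.fun_mul (hasDerivAt_Pfun S b hx)).const_mul β
  rw [show β - 1 - 1 = β - 2 by ring] at h
  refine h.congr_deriv ?_
  ring

lemma hasDerivAt_F1fun (β : ℝ) (hx : 0 < x) :
    HasDerivAt (fun v => β * ((β - 1) * v ^ (β - 2) * Pfun S b v - v ^ (β - 1) * Qfun S b v))
      (β * ((β - 1) * (β - 2) * x ^ (β - 3) * Pfun S b x
        - 2 * (β - 1) * x ^ (β - 2) * Qfun S b x - x ^ (β - 1) * Rfun S b x)) x := by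
  have h2 : HasDerivAt (fun v : ℝ => v ^ (β - 2)) ((β - 2) * x ^ (β - 2 - 1)) x :=
    Real.hasDerivAt_rpow_const (Or.inl hx.ne')
  have h1 : HasDerivAt (fun v : ℝ => v ^ (β - 1)) ((β - 1) * x ^ (β - 1 - 1)) x :=
    Real.hasDerivAt_rpow_const (Or.inl hx.ne')
  have hA := (((h2.fun_mul (hasDerivAt_Pfun S b hx)).const_mul (β - 1)).fun_sub
      (h1.fun_mul (hasDerivAt_Qfun S b hx))).const_mul β
  rw [show β - 2 - 1 = β - 3 by ring, show β - 1 - 1 = β - 2 by ring] at hA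
  have heq : (fun v => β * ((β - 1) * (v ^ (β - 2) * Pfun S b v) - v ^ (β - 1) * Qfun S b v))
      = (fun v => β * ((β - 1) * v ^ (β - 2) * Pfun S b v - v ^ (β - 1) * Qfun S b v)) := by
    funext v; ring
  rw [heq] at hA
  refine hA.congr_deriv ?_
  ring

end


set_option maxHeartbeats 1000000 in
lemma F2_bound {ι : Type*} [DecidableEq ι] (S : Finset ι) (b : ι → ℝ) {β C δ ε : ℝ}
    (hβ2 : 2 < β) (hβC : β < C) (hb0 : ∀ i ∈ S, 0 < b i) (hbC : ∀ i ∈ S, b i ≤ C)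
    (hε : 0 < ε) (hδ0 : 0 < δ) (hδ1 : δ ≤ 1) (hδsq : δ ^ 2 = ε / C) :
    ∀ x ∈ Set.Icc δ 1,
      |β * ((β - 1) * (β - 2) * x ^ (β - 3) * Pfun S b x
        - 2 * (β - 1) * x ^ (β - 2) * Qfun S b x - x ^ (β - 1) * Rfun S b x)|
      ≤ C ^ 4 * ((S.card : ℝ) + 1) ^ 2 / ε := by
  have hC2 : 2 < C := hβ2.trans hβC
  have hC0 : 0 < C := by linarith
  have hβ0 : 0 < β := by linarith
  set n : ℝ := (S.card : ℝ) with hndef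
  have hCε : 0 < C / ε := by positivity
  intro x hx
  have hx0 : 0 < x := lt_of_lt_of_le hδ0 hx.1
  have hxδ : δ ≤ x := hx.1
  have hx1 : x ≤ 1 := hx.2
  have hP : |Pfun S b x| ≤ 1 :=
    abs_Pfun_le_one (fun i hi => (hb0 i hi).le) hx0.le hx1
  have hQ : |Qfun S b x| ≤ n * (C * δ⁻¹) := by
    rw [hndef]; exact abs_Qfun_le hb0 hbC hδ0 hxδ hx1
  have hR : |Rfun S b x| ≤ n * (C * (C-1) * (δ^2)⁻¹) + n * ((n - 1) * (C^2 * (δ^2)⁻¹)) := by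
    rw [hndef]; exact abs_Rfun_le hb0 hbC (by linarith) hδ0 hδ1 hxδ hx1
  have hx3 : |x ^ (β - 3)| ≤ δ⁻¹ := by
    rw [abs_of_nonneg (Real.rpow_nonneg hx0.le _)]
    exact rpow_le_inv_of_le hδ0 hxδ hx1 (by linarith)
  have hx2 : |x ^ (β - 2)| ≤ 1 := by
    rw [abs_of_nonneg (Real.rpow_nonneg hx0.le _)]
    exact Real.rpow_le_one hx0.le hx1 (by linarith)
  have hx1' : |x ^ (β - 1)| ≤ 1 := by
    rw [abs_of_nonneg (Real.rpow_nonneg hx0.le _)]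
    exact Real.rpow_le_one hx0.le hx1 (by linarith)
  have hβ1 : |β - 1| ≤ C - 1 := by rw [abs_of_pos (by linarith)]; linarith
  have hβ2' : |β - 2| ≤ C - 2 := by rw [abs_of_pos (by linarith)]; linarith
  have hδi0 : (0:ℝ) ≤ δ⁻¹ := by positivity
  have hn0 : (0:ℝ) ≤ n := by rw [hndef]; positivity
  -- bound the three terms
  have e1 : |(β - 1) * (β - 2) * x ^ (β - 3) * Pfun S b x| ≤ (C-1) * (C-2) * δ⁻¹ * 1 := by
    rw [abs_mul, abs_mul, abs_mul]
    apply mul_le_mul _ hP (abs_nonneg _)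
      (mul_nonneg (mul_nonneg (by linarith) (by linarith)) hδi0)
    apply mul_le_mul _ hx3 (abs_nonneg _) (mul_nonneg (by linarith) (by linarith))
    apply mul_le_mul hβ1 hβ2' (abs_nonneg _) (by linarith)
  have e2 : |2 * (β - 1) * x ^ (β - 2) * Qfun S b x|
      ≤ 2 * (C-1) * 1 * (n * (C * δ⁻¹)) := by
    rw [abs_mul, abs_mul, abs_mul]
    apply mul_le_mul _ hQ (abs_nonneg _)
      (by linarith : (0:ℝ) ≤ 2 * (C-1) * 1)
    apply mul_le_mul _ hx2 (abs_nonneg _) (by linarith : (0:ℝ) ≤ 2 * (C-1))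
    rw [abs_of_nonneg (by norm_num : (0:ℝ) ≤ 2)]
    apply mul_le_mul le_rfl hβ1 (abs_nonneg _) (by norm_num)
  have e3 : |x ^ (β - 1) * Rfun S b x|
      ≤ 1 * (n * (C * (C-1) * (δ^2)⁻¹) + n * ((n - 1) * (C^2 * (δ^2)⁻¹))) := by
    rw [abs_mul]
    apply mul_le_mul hx1' hR (abs_nonneg _) (by norm_num)
  have etotal : |β * ((β - 1) * (β - 2) * x ^ (β - 3) * Pfun S b x
    - 2 * (β - 1) * x ^ (β - 2) * Qfun S b x - x ^ (β - 1) * Rfun S b x)| ≤ β * ((C-1) * (C-2) * δ⁻¹ * 1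
      + 2 * (C-1) * 1 * (n * (C * δ⁻¹))
      + 1 * (n * (C * (C-1) * (δ^2)⁻¹) + n * ((n - 1) * (C^2 * (δ^2)⁻¹)))) := by
    rw [abs_mul, abs_of_pos hβ0]
    apply mul_le_mul_of_nonneg_left _ hβ0.le
    calc |(β - 1) * (β - 2) * x ^ (β - 3) * Pfun S b x
          - 2 * (β - 1) * x ^ (β - 2) * Qfun S b x - x ^ (β - 1) * Rfun S b x|
        ≤ |(β - 1) * (β - 2) * x ^ (β - 3) * Pfun S b x|
          + |2 * (β - 1) * x ^ (β - 2) * Qfun S b x| + |x ^ (β - 1) * Rfun S b x| := by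
          apply (abs_sub _ _).trans
          apply add_le_add_left
          exact abs_sub _ _
      _ ≤ _ := by linarith
  -- convert to the claimed bound
  have hE : (δ^2)⁻¹ = C / ε := by rw [hδsq, inv_div]
  have hδiE : δ⁻¹ ≤ C / ε := by
    rw [← hE, sq]
    have h1 : δ * δ ≤ δ * 1 := mul_le_mul_of_nonneg_left hδ1 hδ0.le
    exact inv_anti₀ (by positivity) (by linarith)
  calc |β * ((β - 1) * (β - 2) * x ^ (β - 3) * Pfun S b x
    - 2 * (β - 1) * x ^ (β - 2) * Qfun S b x - x ^ (β - 1) * Rfun S b x)| ≤ β * ((C-1) * (C-2) * δ⁻¹ * 1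
      + 2 * (C-1) * 1 * (n * (C * δ⁻¹))
      + 1 * (n * (C * (C-1) * (δ^2)⁻¹) + n * ((n - 1) * (C^2 * (δ^2)⁻¹)))) := etotal
    _ ≤ C * ((C-1) * (C-2) * (C/ε) * 1
      + 2 * (C-1) * 1 * (n * (C * (C/ε)))
      + 1 * (n * (C * (C-1) * (C/ε)) + n * ((n - 1) * (C^2 * (C/ε))))) := by
        rw [hE]
        have key : ((C-1) * (C-2) * δ⁻¹ * 1
          + 2 * (C-1) * 1 * (n * (C * δ⁻¹))
          + 1 * (n * (C * (C-1) * (C/ε)) + n * ((n - 1) * (C^2 * (C/ε)))))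
          ≤ ((C-1) * (C-2) * (C/ε) * 1
          + 2 * (C-1) * 1 * (n * (C * (C/ε)))
          + 1 * (n * (C * (C-1) * (C/ε)) + n * ((n - 1) * (C^2 * (C/ε))))) := by
          have k1 : (C-1) * (C-2) * δ⁻¹ ≤ (C-1) * (C-2) * (C/ε) :=
            mul_le_mul_of_nonneg_left hδiE (mul_nonneg (by linarith) (by linarith))
          have k2 : 2 * (C-1) * 1 * (n * (C * δ⁻¹)) ≤ 2 * (C-1) * 1 * (n * (C * (C/ε))) :=
            mul_le_mul_of_nonneg_left
              (mul_le_mul_of_nonneg_left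
                (mul_le_mul_of_nonneg_left hδiE hC0.le) hn0)
              (by linarith : (0:ℝ) ≤ 2 * (C-1) * 1)
          linarith
        have hpos : 0 ≤ ((C-1) * (C-2) * (C/ε) * 1
          + 2 * (C-1) * 1 * (n * (C * (C/ε)))
          + 1 * (n * (C * (C-1) * (C/ε)) + n * ((n - 1) * (C^2 * (C/ε))))) := by
          have hn1 : 0 ≤ n * (n-1) := by
            rcases S.eq_empty_or_nonempty with h | h
            · simp [hndef, h]
            · have : (1:ℝ) ≤ n := by
                rw [hndef]; exact_mod_cast Finset.card_pos.mpr h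
              nlinarith
          have c1 : (0:ℝ) ≤ C - 1 := by linarith
          have c2 : (0:ℝ) ≤ C - 2 := by linarith
          nlinarith [mul_nonneg (mul_nonneg c1 c2) hCε.le,
            mul_nonneg (mul_nonneg c1 hn0) (mul_nonneg hC0.le hCε.le),
            mul_nonneg hn0 (mul_nonneg (mul_nonneg hC0.le c1) hCε.le),
            mul_nonneg hn1 (mul_nonneg (mul_nonneg hC0.le hC0.le) hCε.le)]
        linarith [mul_le_mul_of_nonneg_left key hβ0.le,
          mul_le_mul_of_nonneg_right hβC.le hpos]
    _ ≤ C ^ 4 * (n + 1) ^ 2 / ε := by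
        rw [show C ^ 4 * (n + 1) ^ 2 / ε = C^3 * (n+1)^2 * (C/ε) by field_simp]
        have hn1 : 0 ≤ n * (n-1) := by
          rcases S.eq_empty_or_nonempty with h | h
          · simp [hndef, h]
          · have : (1:ℝ) ≤ n := by
              rw [hndef]; exact_mod_cast Finset.card_pos.mpr h
            nlinarith
        have hn0 : (0:ℝ) ≤ n := by rw [hndef]; positivity
        have hdiff : 0 ≤ (3*C - 2 + 3*n*C) * (C * (C/ε)) :=
          mul_nonneg (by nlinarith) (mul_nonneg hC0.le hCε.le)
        nlinarith [hdiff]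

set_option maxHeartbeats 1600000 in
/-- Theorem 1(a): discretization error for the likelihood integral. Assume
`2 < exp(w_R + c) < C` and `exp(w i + c) ≤ C` for `i ∈ S`, with `C > 1`. Then
for `0 < ε < C`, approximating
`I = exp(w_R + c) ∫_0^1 v^{exp(w_R+c)−1} ∏_{i∈S} (1 − v^{exp(w i + c)}) dv`
by the composite midpoint rule on `[δ, 1]` with `δ = (ε/C)^{1/2}` and
`T ≥ C² (n+1) / (2√3 ε)` intervals (where `n = |S|`) incurs a total
discretization error at most `ε`. -/
theorem likelihood_integral_discretization_error
    {ι : Type*} (S : Finset ι) (w : ι → ℝ) (wR c C ε : ℝ) (T : ℕ)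
    (hC : 1 < C)
    (hβ2 : 2 < Real.exp (wR + c)) (hβC : Real.exp (wR + c) < C)
    (hb : ∀ i ∈ S, Real.exp (w i + c) ≤ C)
    (hε : 0 < ε) (hεC : ε < C) (hT0 : 0 < T)
    (hT : C ^ 2 * ((S.card : ℝ) + 1) / (2 * Real.sqrt 3 * ε) ≤ (T : ℝ)) :
    |Real.exp (wR + c) *
        (∫ v in (0:ℝ)..1,
          v ^ (Real.exp (wR + c) - 1) *
            ∏ i ∈ S, (1 - v ^ Real.exp (w i + c))) -
      midpointApprox
        (fun v =>
          Real.exp (wR + c) *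
            (v ^ (Real.exp (wR + c) - 1) *
              ∏ i ∈ S, (1 - v ^ Real.exp (w i + c))))
        ((ε / C) ^ ((1:ℝ) / 2)) 1 T| ≤ ε := by
  classical
  set β : ℝ := Real.exp (wR + c) with hβdef
  set b : ι → ℝ := fun i => Real.exp (w i + c) with hbdef
  set δ : ℝ := (ε / C) ^ ((1:ℝ) / 2) with hδdef
  set n : ℝ := (S.card : ℝ) with hndef
  have hC2 : 2 < C := hβ2.trans hβC
  have hC0 : 0 < C := by linarith
  have hb0 : ∀ i ∈ S, 0 < b i := fun i _ => Real.exp_pos _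
  have hbC : ∀ i ∈ S, b i ≤ C := hb
  have hβ0 : 0 < β := Real.exp_pos _
  have hεC0 : 0 < ε / C := div_pos hε hC0
  have hδ0 : 0 < δ := Real.rpow_pos_of_pos hεC0 _
  have hδsq : δ ^ 2 = ε / C := by
    rw [hδdef, ← Real.rpow_natCast ((ε / C) ^ ((1:ℝ)/2)) 2, ← Real.rpow_mul hεC0.le]
    norm_num
  have hδ1 : δ ≤ 1 := by
    nlinarith [hδsq, (div_lt_one hC0).mpr hεC]
  -- the integrand and its derivatives
  set F : ℝ → ℝ := fun v => β * (v ^ (β - 1) * Pfun S b v) with hFdef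
  set F1 : ℝ → ℝ := fun x =>
    β * ((β - 1) * x ^ (β - 2) * Pfun S b x - x ^ (β - 1) * Qfun S b x) with hF1def
  set F2 : ℝ → ℝ := fun x =>
    β * ((β - 1) * (β - 2) * x ^ (β - 3) * Pfun S b x
      - 2 * (β - 1) * x ^ (β - 2) * Qfun S b x - x ^ (β - 1) * Rfun S b x) with hF2def
  set M : ℝ := C ^ 4 * (n + 1) ^ 2 / ε with hMdef
  -- continuity of F on [0,1]
  have hcont : ContinuousOn F (Set.Icc 0 1) := by
    apply ContinuousOn.mul continuousOn_const
    apply ContinuousOn.mul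
    · intro x _
      exact (Real.continuousAt_rpow_const x (β - 1) (Or.inr (by linarith))).continuousWithinAt
    · apply continuousOn_finset_prod
      intro i hi
      apply ContinuousOn.sub continuousOn_const
      intro x _
      exact (Real.continuousAt_rpow_const x (b i) (Or.inr (hb0 i hi).le)).continuousWithinAt
  have hI1 : IntervalIntegrable F MeasureTheory.volume 0 δ := by
    apply ContinuousOn.intervalIntegrable
    rw [Set.uIcc_of_le hδ0.le]
    exact hcont.mono (Set.Icc_subset_Icc le_rfl hδ1)
  have hI2 : IntervalIntegrable F MeasureTheory.volume δ 1 := by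
    apply ContinuousOn.intervalIntegrable
    rw [Set.uIcc_of_le hδ1]
    exact hcont.mono (Set.Icc_subset_Icc hδ0.le le_rfl)
  -- truncation bound
  have htrunc : |∫ v in (0:ℝ)..δ, F v| ≤ ε / 2 := by
    have hF0 : ∀ v ∈ Set.Icc (0:ℝ) δ, 0 ≤ F v := by
      intro v hv
      have hv1 : v ≤ 1 := hv.2.trans hδ1
      have hP0 := Pfun_nonneg (S := S) (b := b) (fun i hi => (hb0 i hi).le) hv.1 hv1
      have := Real.rpow_nonneg hv.1 (β - 1)
      simp only [hFdef]
      positivity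
    have hFle : ∀ v ∈ Set.Icc (0:ℝ) δ, F v ≤ C * v := by
      intro v hv
      have hv1 : v ≤ 1 := hv.2.trans hδ1
      have hpow : v ^ (β - 1) ≤ v := by
        rcases eq_or_lt_of_le hv.1 with h | h
        · rw [← h, Real.zero_rpow (by linarith : β - 1 ≠ 0)]
        · calc v ^ (β - 1) ≤ v ^ (1:ℝ) :=
              Real.rpow_le_rpow_of_exponent_ge h hv1 (by linarith)
            _ = v := Real.rpow_one v
      have hP1 := Pfun_le_one (S := S) (b := b) (fun i hi => (hb0 i hi).le) hv.1 hv1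
      have hP0 := Pfun_nonneg (S := S) (b := b) (fun i hi => (hb0 i hi).le) hv.1 hv1
      have hpow0 : 0 ≤ v ^ (β - 1) := Real.rpow_nonneg hv.1 _
      calc F v = β * (v ^ (β - 1) * Pfun S b v) := rfl
        _ ≤ β * (v ^ (β - 1) * 1) :=
            mul_le_mul_of_nonneg_left (mul_le_mul_of_nonneg_left hP1 hpow0) hβ0.le
        _ = β * v ^ (β - 1) := by ring
        _ ≤ C * v := mul_le_mul hβC.le hpow hpow0 hC0.le
    have h1 : (∫ v in (0:ℝ)..δ, F v) ≤ ∫ v in (0:ℝ)..δ, C * v := by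
      apply intervalIntegral.integral_mono_on hδ0.le hI1
        (Continuous.intervalIntegrable (by fun_prop) 0 δ) hFle
    have h2 : (∫ v in (0:ℝ)..δ, C * v) = ε / 2 := by
      rw [intervalIntegral.integral_const_mul, integral_id]
      rw [show δ ^ 2 - 0 ^ 2 = ε / C by rw [← hδsq]; ring]
      field_simp
    have h3 : 0 ≤ ∫ v in (0:ℝ)..δ, F v :=
      intervalIntegral.integral_nonneg hδ0.le hF0
    rw [abs_of_nonneg h3]
    linarith
  have hM : ∀ x ∈ Set.Icc δ 1, |F2 x| ≤ M := by
    rw [hF2def, hMdef]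
    exact F2_bound S b hβ2 hβC hb0 hbC hε hδ0 hδ1 hδsq
  -- midpoint rule bound on [δ,1]
  have hf : ∀ x ∈ Set.Icc δ 1, HasDerivAt F (F1 x) x := fun x hx =>
    hasDerivAt_Ffun S b β (lt_of_lt_of_le hδ0 hx.1)
  have hf1 : ∀ x ∈ Set.Icc δ 1, HasDerivAt F1 (F2 x) x := fun x hx =>
    hasDerivAt_F1fun S b β (lt_of_lt_of_le hδ0 hx.1)
  have hmid : |(∫ x in δ..1, F x) - midpointApprox F δ 1 T| ≤ M * (1 - δ)^3 / (24 * T^2) :=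
    midpoint_composite F F1 F2 δ 1 M T hT0 hδ1 hf hf1 hM
  -- numeric bound for the midpoint error
  have hTfin : M * (1 - δ)^3 / (24 * T^2) ≤ ε / 2 := by
    have hTpos : (0:ℝ) < T := by exact_mod_cast hT0
    have hs3 : Real.sqrt 3 ^ 2 = 3 := Real.sq_sqrt (by norm_num)
    have hs3pos : 0 < Real.sqrt 3 := Real.sqrt_pos.mpr (by norm_num)
    have hK0 : 0 < C ^ 2 * (n + 1) := by positivity
    have hKT : C ^ 2 * (n + 1) ≤ (T:ℝ) * (2 * Real.sqrt 3 * ε) :=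
      (div_le_iff₀ (by positivity)).mp hT
    have hT2 : (C ^ 2 * (n + 1))^2 ≤ (T:ℝ)^2 * (12 * ε^2) := by
      nlinarith [sq_nonneg ((T:ℝ) * (2 * Real.sqrt 3 * ε))]
    have hM12 : M ≤ 12 * ε * (T:ℝ)^2 := by
      rw [hMdef, div_le_iff₀ hε]
      nlinarith
    have hδ3 : M * (1 - δ)^3 ≤ M := by
      have hM0 : 0 ≤ M := by rw [hMdef]; positivity
      have h01 : 0 ≤ 1 - δ := by linarith
      have h11 : (1 - δ)^3 ≤ 1 := by nlinarith
      nlinarith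
    rw [div_le_iff₀ (by positivity)]
    nlinarith
  -- assemble
  have hprod : ∀ v : ℝ, (∏ i ∈ S, (1 - v ^ Real.exp (w i + c))) = Pfun S b v := fun v => rfl
  calc |β * (∫ v in (0:ℝ)..1, v ^ (β - 1) * ∏ i ∈ S, (1 - v ^ Real.exp (w i + c)))
        - midpointApprox (fun v => β * (v ^ (β - 1) * ∏ i ∈ S, (1 - v ^ Real.exp (w i + c)))) δ 1 T|
      = |(∫ v in (0:ℝ)..1, F v) - midpointApprox F δ 1 T| := by
        rw [← intervalIntegral.integral_const_mul]
        simp only [hprod, hFdef]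
    _ = |(∫ v in (0:ℝ)..δ, F v) + ((∫ v in δ..1, F v) - midpointApprox F δ 1 T)| := by
        rw [← intervalIntegral.integral_add_adjacent_intervals hI1 hI2]
        congr 1
        ring
    _ ≤ |∫ v in (0:ℝ)..δ, F v| + |(∫ v in δ..1, F v) - midpointApprox F δ 1 T| := abs_add_le _ _
    _ ≤ ε / 2 + ε / 2 := add_le_add htrunc (hmid.trans hTfin)
    _ = ε := by ring
end
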